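/- arXiv:math/0701519 — 8 statements merged into one kernel-verified Lean document; each statement's English description precedes it below -/
import Mathlib

section
/- Let Σ = {0,1,2,3} and l : Σ → {0,1} with l(0)=l(1)=0, l(2)=l(3)=1. Define L⟨x₀,…,xₙ⟩ = l(x₀) ⊕ ⋯ ⊕ l(xₙ) ⊕ 1. Then the map sending a Boolean function λ : {0,1}ⁿ → {0,1} to the predicate f⟨x₀,…,xₙ⟩ = L⟨x₀,…,xₙ⟩ · (x₀ ⊕ x₁ ⊕ ⋯ ⊕ xₙ ⊕ λ(l(x₁),…,l(xₙ))), where xᵢ are viewed as elements of Z₂² and ⊕ is componentwise XOR, is a bijection between Boolean functions on {0,1}ⁿ and standardly semilinear n-quasigroups of order 4. -/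
/-- An `n`-ary quasigroup: uniquely invertible in each place. -/
def IsNQuasigroup {n : ℕ} {S : Type*} (f : (Fin n → S) → S) : Prop :=
  ∀ (i : Fin n) (x : Fin n → S), Function.Bijective fun a => f (Function.update x i a)

/-- Permutable reducibility (Definition 1.4). -/
def PermutablyReducible {n : ℕ} {S : Type*} (f : (Fin n → S) → S) : Prop :=
  ∃ (m : ℕ) (_ : 2 ≤ m) (_ : m ≤ n - 1)
    (σ : Equiv.Perm (Fin n))
    (g : (Fin m → S) → S)
    (h : (Fin (n - m + 1) → S) → S),
    IsNQuasigroup g ∧ IsNQuasigroup h ∧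
    ∀ x : Fin n → S,
      f x = h (Fin.cons (g fun k : Fin m => x (σ ⟨k.val, by have := k.isLt; omega⟩))
                 fun j : Fin (n - m) => x (σ ⟨m + j.val, by have := j.isLt; omega⟩))

/-- `l(0)=l(1)=0`, `l(2)=l(3)=1`. -/
def lmap : Fin 4 → ZMod 2 := ![0, 0, 1, 1]

/-- Standardly semilinear: the predicate of `f` is pointwise `≤ L`. -/
def StdSemilinear {n : ℕ} (f : (Fin n → Fin 4) → Fin 4) : Prop :=
  ∀ x : Fin n → Fin 4, lmap (f x) = ∑ i, lmap (x i)

def Semilinear {n : ℕ} (f : (Fin n → Fin 4) → Fin 4) : Prop :=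
  ∃ (g : (Fin n → Fin 4) → Fin 4) (τ₀ : Equiv.Perm (Fin 4)) (τ : Fin n → Equiv.Perm (Fin 4)),
    IsNQuasigroup g ∧ StdSemilinear g ∧ ∀ x, τ₀ (f x) = g fun i => τ i (x i)

noncomputable def PrincipalRetract {n k : ℕ} {S : Type*} (f : (Fin n → S) → S) (ι : Fin k → Fin n)
    (c : Fin n → S) : (Fin k → S) → S :=
  fun y => f (Function.extend ι y c)

def IsBinaryQG {S : Type*} (h : S → S → S) : Prop :=
  (∀ a, Function.Bijective (h a)) ∧ ∀ b, Function.Bijective fun a => h a b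

def CondA {n : ℕ} {C : Type*} (μ : Fin n → Fin n → C) : Prop :=
  ∀ a b c : Fin n, a ≠ b → a ≠ c → b ≠ c →
    μ a b = μ a c ∨ μ a b = μ b c ∨ μ a c = μ b c

def CondB {n : ℕ} {C : Type*} [DecidableEq C] (μ : Fin n → Fin n → C) : Prop :=
  ∀ a b c d : Fin n, a ≠ b → a ≠ c → a ≠ d → b ≠ c → b ≠ d → c ≠ d →
    (∃ c₁ c₂ : C, c₁ ≠ c₂ ∧
      [μ a b, μ a c, μ a d, μ b c, μ b d, μ c d].count c₁ = 3 ∧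
      [μ a b, μ a c, μ a d, μ b c, μ b d, μ c d].count c₂ = 3) →
    ((μ a b = μ a c ∧ μ a c = μ b c) ∨ (μ a b = μ a d ∧ μ a d = μ b d) ∨
     (μ a c = μ a d ∧ μ a d = μ c d) ∨ (μ b c = μ b d ∧ μ b d = μ c d))

def colorOf {n : ℕ} (f : (Fin n → Fin 4) → Fin 4) (i j : Fin n) : Fin 4 → Fin 4 → Fin 4 :=
  fun a b => f fun t => if t = i then a else if t = j then b else 0

def Normalized {n : ℕ} (f : (Fin n → Fin 4) → Fin 4) : Prop :=
  ∀ (i : Fin n) (a : Fin 4), f (fun t => if t = i then a else 0) = a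

def piPerm : Fin 4 → Fin 4 := ![1, 0, 3, 2]


section Stmt1Aux

private lemma zmod2_flip : ∀ p q u v : ZMod 2, p ≠ q → u ≠ v → p + u = q + v := by decide

private lemma zmod2_prod (a b s1 s2 c : ZMod 2) :
    (1 + a + s1) * (b + s2 + c) = if (a, b) = (s1, 1 + s2 + c) then 1 else 0 := by
  revert a b s1 s2 c; decide

private lemma flip_lemma {n : ℕ} (f : (Fin n → ZMod 2 × ZMod 2) → ZMod 2 × ZMod 2)
    (hq : IsNQuasigroup f) (h1 : ∀ x, (f x).1 = ∑ i, (x i).1)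
    (a : Fin n) (z : Fin n → ZMod 2 × ZMod 2) (u v : ZMod 2 × ZMod 2) (huv : u.1 = v.1) :
    (f (Function.update z a u)).2 + u.2 = (f (Function.update z a v)).2 + v.2 := by
  by_cases h : u = v
  · rw [h]
  · have hinj := (hq a z).1
    have hne : f (Function.update z a u) ≠ f (Function.update z a v) := fun hc => h (hinj hc)
    have hfst : (f (Function.update z a u)).1 = (f (Function.update z a v)).1 := by
      rw [h1, h1]
      refine Finset.sum_congr rfl fun i _ => ?_
      by_cases hi : i = a
      · subst hi; simp [huv]
      · simp [Function.update_of_ne hi]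
    have h2 : u.2 ≠ v.2 := fun hc => h (Prod.ext huv hc)
    have h2' : (f (Function.update z a u)).2 ≠ (f (Function.update z a v)).2 :=
      fun hc => hne (Prod.ext hfst hc)
    exact zmod2_flip _ _ _ _ h2' h2

private lemma sum2_lemma {n : ℕ} (f : (Fin n → ZMod 2 × ZMod 2) → ZMod 2 × ZMod 2)
    (hq : IsNQuasigroup f) (h1 : ∀ x, (f x).1 = ∑ i, (x i).1)
    (x y : Fin n → ZMod 2 × ZMod 2) (hxy : ∀ i, (x i).1 = (y i).1) :
    (f y).2 + ∑ i, (y i).2 = (f x).2 + ∑ i, (x i).2 := by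
  have key : ∀ s : Finset (Fin n),
      (f (fun i => if i ∈ s then y i else x i)).2 + ∑ i ∈ s, (y i).2
        = (f x).2 + ∑ i ∈ s, (x i).2 := by
    intro s
    induction s using Finset.induction_on with
    | empty => simp
    | @insert a s ha ih =>
      set m : Fin n → ZMod 2 × ZMod 2 := fun i => if i ∈ s then y i else x i with hm
      have hmy : (fun i => if i ∈ insert a s then y i else x i) = Function.update m a (y a) := by
        funext j
        by_cases hj : j = a
        · subst hj; simp [Function.update_self, ha]
        · simp [Function.update_of_ne hj, hm, hj]
      have hmx : m = Function.update m a (x a) := by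
        funext j
        by_cases hj : j = a
        · subst hj; simp [Function.update_self, hm, ha]
        · simp [Function.update_of_ne hj]
      have hflip := flip_lemma f hq h1 a m (y a) (x a) (hxy a).symm
      rw [hmy, Finset.sum_insert ha, Finset.sum_insert ha]
      calc (f (Function.update m a (y a))).2 + ((y a).2 + ∑ i ∈ s, (y i).2)
          = ((f (Function.update m a (y a))).2 + (y a).2) + ∑ i ∈ s, (y i).2 := by ring
        _ = ((f (Function.update m a (x a))).2 + (x a).2) + ∑ i ∈ s, (y i).2 := by rw [hflip]
        _ = ((f m).2 + ∑ i ∈ s, (y i).2) + (x a).2 := by rw [← hmx]; ring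
        _ = ((f x).2 + ∑ i ∈ s, (x i).2) + (x a).2 := by rw [ih]
        _ = (f x).2 + ((x a).2 + ∑ i ∈ s, (x i).2) := by ring
  have := key Finset.univ
  simpa using this

private lemma indicator_eq {n : ℕ} (lam : (Fin n → ZMod 2) → ZMod 2)
    (f : (Fin n → ZMod 2 × ZMod 2) → ZMod 2 × ZMod 2)
    (hf : ∀ x, f x = (∑ i, (x i).1, 1 + ∑ i, (x i).2 + lam fun i => (x i).1)) :
    (fun (x₀ : ZMod 2 × ZMod 2) (x : Fin n → ZMod 2 × ZMod 2) =>
        (1 + x₀.1 + ∑ i, (x i).1) *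
          (x₀ + ∑ i, x i + ((0 : ZMod 2), lam fun i => (x i).1)).2)
      = fun x₀ x => if x₀ = f x then 1 else 0 := by
  funext x₀ x
  rw [hf]
  obtain ⟨a, b⟩ := x₀
  have hs2 : (((a, b) : ZMod 2 × ZMod 2) + ∑ i, x i + ((0 : ZMod 2), lam fun i => (x i).1)).2
      = b + (∑ i, (x i).2) + lam (fun i => (x i).1) := by
    simp [Prod.snd_sum]
  rw [hs2]
  exact zmod2_prod a b _ _ _

end Stmt1Aux

/-- the map `λ ↦ f⟨x̄⟩ = L⟨x̄⟩·(x₀ ⊕ ⋯ ⊕ xₙ ⊕ λ(l(x₁),…,l(xₙ)))` is a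
bijection between Boolean functions on `{0,1}ⁿ` and (predicates of) standardly
semilinear `n`-quasigroups of order 4, where `Σ = {0,1,2,3}` is identified with
`Z₂ × Z₂` (first component `l`, the high bit). -/
theorem stmt1 (n : ℕ) :
    Set.BijOn
      (fun (lam : (Fin n → ZMod 2) → ZMod 2) =>
        fun (x₀ : ZMod 2 × ZMod 2) (x : Fin n → ZMod 2 × ZMod 2) =>
          (1 + x₀.1 + ∑ i, (x i).1) *
            (x₀ + ∑ i, x i + ((0 : ZMod 2), lam fun i => (x i).1)).2)
      Set.univ
      {P : (ZMod 2 × ZMod 2) → (Fin n → ZMod 2 × ZMod 2) → ZMod 2 |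
        ∃ f : (Fin n → ZMod 2 × ZMod 2) → ZMod 2 × ZMod 2,
          IsNQuasigroup f ∧
          (∀ x, (f x).1 = ∑ i, (x i).1) ∧
          P = fun x₀ x => if x₀ = f x then 1 else 0} := by
  refine ⟨?_, ?_, ?_⟩
  · -- MapsTo
    intro lam _
    refine ⟨fun x => (∑ i, (x i).1, 1 + ∑ i, (x i).2 + lam fun i => (x i).1), ?_, fun x => rfl, ?_⟩
    · intro i x
      rw [Fintype.bijective_iff_injective_and_card]
      refine ⟨fun a b hab => ?_, rfl⟩
      simp only [Prod.mk.injEq] at hab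
      have hs1 : ∀ c : ZMod 2 × ZMod 2,
          ∑ j, (Function.update x i c j).1 = c.1 + ∑ j ∈ Finset.univ \ {i}, (x j).1 := by
        intro c
        have e : ∀ j : Fin n, (Function.update x i c j).1
            = Function.update (fun k => (x k).1) i c.1 j :=
          fun j => Function.apply_update (fun _ p => p.1) x i c j
        rw [Finset.sum_congr rfl fun j _ => e j]
        exact Finset.sum_update_of_mem (Finset.mem_univ i) _ _
      have hs2 : ∀ c : ZMod 2 × ZMod 2,
          ∑ j, (Function.update x i c j).2 = c.2 + ∑ j ∈ Finset.univ \ {i}, (x j).2 := by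
        intro c
        have e : ∀ j : Fin n, (Function.update x i c j).2
            = Function.update (fun k => (x k).2) i c.2 j :=
          fun j => Function.apply_update (fun _ p => p.2) x i c j
        rw [Finset.sum_congr rfl fun j _ => e j]
        exact Finset.sum_update_of_mem (Finset.mem_univ i) _ _
      obtain ⟨h1', h2'⟩ := hab
      rw [hs1 a, hs1 b] at h1'
      have ha1 : a.1 = b.1 := add_right_cancel h1'
      have hlam : (fun j => (Function.update x i a j).1)
          = fun j => (Function.update x i b j).1 := by
        funext j; by_cases hj : j = i
        · subst hj; simp [ha1]
        · simp [Function.update_of_ne hj]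
      rw [hlam, hs2 a, hs2 b] at h2'
      have helper : ∀ t l p q : ZMod 2, 1 + (p + t) + l = 1 + (q + t) + l → p = q := by decide
      exact Prod.ext ha1 (helper _ _ _ _ h2')
    · exact indicator_eq lam _ fun x => rfl
  · -- InjOn
    intro lam1 _ lam2 _ h
    funext b
    have := congrFun (congrFun h ((∑ i, b i, 0) : ZMod 2 × ZMod 2)) (fun i => ((b i, 0) : ZMod 2 × ZMod 2))
    simp only [Prod.snd_sum, Prod.snd_add, Prod.fst, Prod.snd, Finset.sum_const_zero,
      zero_add, add_zero] at this
    have helper : ∀ s u v : ZMod 2, (1 + s + s) * u = (1 + s + s) * v → u = v := by decide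
    exact helper _ _ _ this
  · -- SurjOn
    rintro P ⟨f, hq, h1, rfl⟩
    refine ⟨fun b => 1 + (f fun i => (b i, 0)).2, Set.mem_univ _, ?_⟩
    show _ = _
    refine indicator_eq (fun b => 1 + (f fun i => ((b i : ZMod 2), (0 : ZMod 2))).2) f fun x => ?_
    have hkey := sum2_lemma f hq h1 (fun i => ((x i).1, 0)) x (fun i => rfl)
    refine Prod.ext (h1 x) ?_
    simp only at hkey ⊢
    have hz : ∑ i : Fin n, ((((x i).1, (0 : ZMod 2)) : ZMod 2 × ZMod 2)).2 = 0 := by simp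
    rw [hz, add_zero] at hkey
    have helper : ∀ p s2 q : ZMod 2, p + s2 = q → p = 1 + s2 + (1 + q) := by decide
    exact helper _ _ _ hkey
end

section
/- The number of standardly semilinear n-quasigroups of order 4 is exactly 2^(2^n). -/
def hmap : Fin 4 → ZMod 2 := ![0, 1, 0, 1]
def enc : ZMod 2 → ZMod 2 → Fin 4 :=
  fun h l => if l = 0 then (if h = 0 then 0 else 1) else (if h = 0 then 2 else 3)
lemma hmap_enc : ∀ h l, hmap (enc h l) = h := by decide
lemma lmap_enc : ∀ h l, lmap (enc h l) = l := by decide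
lemma enc_hl : ∀ a : Fin 4, enc (hmap a) (lmap a) = a := by decide
lemma hl_inj : ∀ a b : Fin 4, hmap a = hmap b → lmap a = lmap b → a = b := by decide
lemma flip4 : ∀ u v : Fin 4, u ≠ v → lmap u = lmap v → hmap u = hmap v + 1 := by decide

lemma sum_comp_update {n : ℕ} (φ : Fin 4 → ZMod 2) (x : Fin n → Fin 4) (i : Fin n) (a : Fin 4) :
    ∑ j, φ (Function.update x i a j) = φ a + ∑ j ∈ Finset.univ.erase i, φ (x j) := by
  have : (fun j => φ (Function.update x i a j)) = Function.update (φ ∘ x) i (φ a) := by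
    rw [← Function.comp_update]; rfl
  rw [show ∑ j, φ (Function.update x i a j) = ∑ j, Function.update (φ ∘ x) i (φ a) j from by
    simp [this]]
  rw [Finset.sum_update_of_mem (Finset.mem_univ i), Finset.erase_eq]
  rfl

lemma flip_lemma_s2 {n : ℕ} {f : (Fin n → Fin 4) → Fin 4} (hq : IsNQuasigroup f)
    (hs : StdSemilinear f) (x : Fin n → Fin 4) (i : Fin n) (a a' : Fin 4)
    (hl : lmap a = lmap a') (hne : a ≠ a') :
    hmap (f (Function.update x i a)) = hmap (f (Function.update x i a')) + 1 := by
  apply flip4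
  · exact fun h => hne ((hq i x).injective h)
  · rw [hs, hs, sum_comp_update, sum_comp_update, hl]

/-- Key invariance: hmap(f x) + ∑ hmap(x i) depends only on lmap∘x. -/
lemma key {n : ℕ} {f : (Fin n → Fin 4) → Fin 4} (hq : IsNQuasigroup f)
    (hs : StdSemilinear f) (x : Fin n → Fin 4) :
    hmap (f x) + ∑ i, hmap (x i) = hmap (f fun i => enc 0 (lmap (x i))) := by
  -- y k : first k coordinates replaced
  set y : ℕ → Fin n → Fin 4 := fun k i => if i.val < k then enc 0 (lmap (x i)) else x i with hy
  have h0 : y 0 = x := by funext i; simp [hy]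
  have hn : y n = fun i => enc 0 (lmap (x i)) := by funext i; simp [hy, i.isLt]
  have step : ∀ k, k < n →
      hmap (f (y k)) + ∑ i, hmap (y k i) = hmap (f (y (k+1))) + ∑ i, hmap (y (k+1) i) := by
    intro k hk
    set i : Fin n := ⟨k, hk⟩ with hi
    have hyk : y k i = x i := by simp [hy, hi]
    have hupd : y (k+1) = Function.update (y k) i (enc 0 (lmap (x i))) := by
      funext j
      rcases eq_or_ne j i with rfl | hji
      · simp [hy, hi, Function.update_self]
      · have hjk : j.val ≠ k := fun h => hji (Fin.ext h)
        have hiff : (j.val < k + 1) = (j.val < k) := by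
          simp only [eq_iff_iff]; omega
        simp [hy, Function.update_of_ne hji, hiff]
    by_cases hcase : x i = enc 0 (lmap (x i))
    · rw [hupd, ← hcase, ← hyk, Function.update_eq_self]
    · have hsame : y k = Function.update (y k) i (x i) := by rw [← hyk, Function.update_eq_self]
      have hf : hmap (f (y k)) = hmap (f (y (k+1))) + 1 := by
        rw [hupd]
        conv_lhs => rw [hsame]
        exact flip_lemma_s2 hq hs (y k) i (x i) (enc 0 (lmap (x i))) (by rw [lmap_enc]) hcase
      have hsum : ∑ j, hmap (y k j) = (∑ j, hmap (y (k+1) j)) + 1 := by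
        rw [hupd]
        conv_lhs => rw [hsame]
        rw [sum_comp_update, sum_comp_update, hmap_enc]
        have hx1 : hmap (x i) = 1 := by
          have := flip4 (x i) (enc 0 (lmap (x i))) hcase (by rw [lmap_enc])
          rw [hmap_enc] at this; simpa using this
        rw [hx1]; ring
      rw [hf, hsum]
      ring_nf
      rw [show (2:ZMod 2) = 0 by decide]
      ring
  have main : ∀ k, k ≤ n →
      hmap (f (y 0)) + ∑ i, hmap (y 0 i) = hmap (f (y k)) + ∑ i, hmap (y k i) := by
    intro k hk
    induction k with
    | zero => rfl
    | succ m ih => rw [ih (by omega), step m (by omega)]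
  have := main n le_rfl
  rw [h0, hn] at this
  simpa [hmap_enc] using this

/-- The decoded function associated to `g`. -/
def decf {n : ℕ} (g : (Fin n → ZMod 2) → ZMod 2) : (Fin n → Fin 4) → Fin 4 :=
  fun x => enc (g (fun i => lmap (x i)) + ∑ i, hmap (x i)) (∑ i, lmap (x i))

lemma decf_std {n : ℕ} (g : (Fin n → ZMod 2) → ZMod 2) : StdSemilinear (decf g) := by
  intro x; rw [decf, lmap_enc]

lemma decf_qg {n : ℕ} (g : (Fin n → ZMod 2) → ZMod 2) : IsNQuasigroup (decf g) := by
  intro i x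
  rw [Fintype.bijective_iff_injective_and_card]
  refine ⟨?_, rfl⟩
  intro a b hab
  simp only [decf] at hab
  have hl : lmap a = lmap b := by
    have := congrArg lmap hab
    rw [lmap_enc, lmap_enc, sum_comp_update, sum_comp_update] at this
    exact add_right_cancel this
  have hupdeq : (fun j => lmap (Function.update x i a j)) =
      (fun j => lmap (Function.update x i b j)) := by
    funext j
    rcases eq_or_ne j i with rfl | hji
    · simp [hl]
    · simp [Function.update_of_ne hji]
  have hh : hmap a = hmap b := by
    have := congrArg hmap hab
    rw [hmap_enc, hmap_enc, sum_comp_update, sum_comp_update, hupdeq] at this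
    exact add_right_cancel (add_left_cancel this)
  exact hl_inj a b hh hl

noncomputable def theEquiv (n : ℕ) :
    {f : (Fin n → Fin 4) → Fin 4 // IsNQuasigroup f ∧ StdSemilinear f}
      ≃ ((Fin n → ZMod 2) → ZMod 2) where
  toFun f := fun v => hmap (f.1 fun i => enc 0 (v i))
  invFun g := ⟨decf g, decf_qg g, decf_std g⟩
  left_inv := by
    rintro ⟨f, hq, hs⟩
    apply Subtype.ext
    funext x
    show decf (fun v => hmap (f fun i => enc 0 (v i))) x = f x
    rw [decf]
    have hK := key hq hs x
    have : hmap (f fun i => enc 0 (lmap (x i))) + ∑ i, hmap (x i) = hmap (f x) := by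
      rw [← hK, add_assoc, CharTwo.add_self_eq_zero, add_zero]
    rw [this, ← hs x, enc_hl]
  right_inv := by
    intro g
    funext v
    show hmap (decf g fun i => enc 0 (v i)) = g v
    rw [decf, hmap_enc]
    simp [hmap_enc, lmap_enc]


/-- the number of standardly semilinear `n`-quasigroups of order 4
is exactly `2^(2^n)`. -/
theorem stmt2 (n : ℕ) :
    Nat.card {f : (Fin n → Fin 4) → Fin 4 // IsNQuasigroup f ∧ StdSemilinear f}
      = 2 ^ 2 ^ n := by
  rw [Nat.card_congr (theEquiv n)]
  simp [Nat.card_eq_fintype_card]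
end

section
/- Let f be an n-quasigroup (n ≥ 5) of order 4 all of whose 3-retracts and 4-retracts (obtained from the predicate by fixing all but 3 resp. 4 of the unfixed variables, keeping x₀ free) are permutably reducible, and suppose f is normalized. Then the edge coloring μ_f of the complete graph Kₙ on vertices x₁,…,xₙ, where μ_f(xᵢxⱼ) is the normalized binary quasigroup ⋆ with f(0,…,0,xᵢ,0,…,0,xⱼ,0,…,0) = xᵢ⋆xⱼ, satisfies: (A) every triangle uses at most 2 colors, and (B) no 4-clique is colored by exactly 2 colors with 3 edges of each color forming two edge-disjoint paths (equivalently, every 2-colored 4-clique with 3 edges of each color contains a monochromatic triangle). -/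
section Aux

lemma myCountTwoLe {α : Type*} [DecidableEq α] (l : List α) {c₁ c₂ : α} (h : c₁ ≠ c₂) :
    l.count c₁ + l.count c₂ ≤ l.length := by
  induction l with
  | nil => simp
  | cons a l ih =>
    rw [List.count_cons, List.count_cons, List.length_cons]
    by_cases h1 : a = c₁ <;> by_cases h2 : a = c₂ <;> simp_all <;> omega

lemma myMemTwo {α : Type*} [DecidableEq α] (l : List α) {c₁ c₂ : α} (h : c₁ ≠ c₂)
    (hc : l.count c₁ + l.count c₂ = l.length) : ∀ x ∈ l, x = c₁ ∨ x = c₂ := by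
  induction l with
  | nil => simp
  | cons a l ih =>
    intro x hx
    rw [List.count_cons, List.count_cons, List.length_cons] at hc
    have hle := myCountTwoLe l h
    rcases List.mem_cons.mp hx with rfl | hx
    · by_cases h1 : x = c₁
      · exact Or.inl h1
      · by_cases h2 : x = c₂
        · exact Or.inr h2
        · exfalso; simp [beq_iff_eq, h1, h2, h, Ne.symm h] at hc; omega
    · refine ih ?_ x hx
      by_cases h1 : a = c₁ <;> by_cases h2 : a = c₂ <;>
        simp [beq_iff_eq, h1, h2, h, Ne.symm h] at hc <;> omega

set_option maxHeartbeats 1000000 in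
lemma myTwoRows12 : ∀ p1 p2 p3 q1 q2 q3 : ℕ,
    p1 < 4 → p2 < 4 → p3 < 4 → q1 < 4 → q2 < 4 → q3 < 4 →
    p1 ≠ 1 → p2 ≠ 1 → p3 ≠ 1 → p1 ≠ p2 → p1 ≠ p3 → p2 ≠ p3 →
    q1 ≠ 2 → q2 ≠ 2 → q3 ≠ 2 → q1 ≠ q2 → q1 ≠ q3 → q2 ≠ q3 →
    p2 ≠ 2 → p3 ≠ 3 → q1 ≠ 1 → q3 ≠ 3 →
    p1 ≠ q1 → p2 ≠ q2 → p3 ≠ q3 →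
    p2 = q1 := by omega

set_option maxHeartbeats 1000000 in
lemma myTwoRows13 : ∀ p1 p2 p3 q1 q2 q3 : ℕ,
    p1 < 4 → p2 < 4 → p3 < 4 → q1 < 4 → q2 < 4 → q3 < 4 →
    p1 ≠ 1 → p2 ≠ 1 → p3 ≠ 1 → p1 ≠ p2 → p1 ≠ p3 → p2 ≠ p3 →
    q1 ≠ 3 → q2 ≠ 3 → q3 ≠ 3 → q1 ≠ q2 → q1 ≠ q3 → q2 ≠ q3 →
    p2 ≠ 2 → p3 ≠ 3 → q1 ≠ 1 → q2 ≠ 2 →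
    p1 ≠ q1 → p2 ≠ q2 → p3 ≠ q3 →
    p3 = q1 := by omega

set_option maxHeartbeats 1000000 in
lemma myTwoRows23 : ∀ p1 p2 p3 q1 q2 q3 : ℕ,
    p1 < 4 → p2 < 4 → p3 < 4 → q1 < 4 → q2 < 4 → q3 < 4 →
    p1 ≠ 2 → p2 ≠ 2 → p3 ≠ 2 → p1 ≠ p2 → p1 ≠ p3 → p2 ≠ p3 →
    q1 ≠ 3 → q2 ≠ 3 → q3 ≠ 3 → q1 ≠ q2 → q1 ≠ q3 → q2 ≠ q3 →
    p1 ≠ 1 → p3 ≠ 3 → q1 ≠ 1 → q2 ≠ 2 →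
    p1 ≠ q1 → p2 ≠ q2 → p3 ≠ q3 →
    p3 = q2 := by omega

lemma myBinComm (H : Fin 4 → Fin 4 → Fin 4)
    (hrow : ∀ a, Function.Injective (H a))
    (hcol : ∀ b, Function.Injective (fun a => H a b))
    (h0 : ∀ a, H a 0 = a) (h0' : ∀ b, H 0 b = b) :
    ∀ a b, H a b = H b a := by
  have hne : ∀ (x : Fin 4) {u v : Fin 4}, u ≠ v → (H x u).val ≠ (H x v).val := by
    intro x u v huv e
    exact huv (hrow x (Fin.val_injective e))
  have cne : ∀ (y : Fin 4) {u v : Fin 4}, u ≠ v → (H u y).val ≠ (H v y).val := by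
    intro y u v huv e
    exact huv (hcol y (Fin.val_injective e))
  -- row entries differ from the row index
  have hrv : ∀ (x k : Fin 4), k ≠ 0 → (H x k).val ≠ x.val := by
    intro x k hk e
    have := hne x hk
    rw [h0 x] at this
    exact this e
  -- column entries differ from the column index
  have hcv : ∀ (y k : Fin 4), k ≠ 0 → (H k y).val ≠ y.val := by
    intro y k hk e
    have := cne y hk
    rw [h0' y] at this
    exact this e
  have e12 : H 1 2 = H 2 1 := by
    apply Fin.val_injective
    exact myTwoRows12 (H 1 1).val (H 1 2).val (H 1 3).val (H 2 1).val (H 2 2).val (H 2 3).val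
      (H 1 1).isLt (H 1 2).isLt (H 1 3).isLt (H 2 1).isLt (H 2 2).isLt (H 2 3).isLt
      (hrv 1 1 (by decide)) (hrv 1 2 (by decide)) (hrv 1 3 (by decide))
      (hne 1 (by decide : (1:Fin 4) ≠ 2)) (hne 1 (by decide : (1:Fin 4) ≠ 3)) (hne 1 (by decide : (2:Fin 4) ≠ 3))
      (hrv 2 1 (by decide)) (hrv 2 2 (by decide)) (hrv 2 3 (by decide))
      (hne 2 (by decide : (1:Fin 4) ≠ 2)) (hne 2 (by decide : (1:Fin 4) ≠ 3)) (hne 2 (by decide : (2:Fin 4) ≠ 3))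
      (hcv 2 1 (by decide)) (hcv 3 1 (by decide)) (hcv 1 2 (by decide)) (hcv 3 2 (by decide))
      (cne 1 (by decide : (1:Fin 4) ≠ 2)) (cne 2 (by decide : (1:Fin 4) ≠ 2)) (cne 3 (by decide : (1:Fin 4) ≠ 2))
  have e13 : H 1 3 = H 3 1 := by
    apply Fin.val_injective
    exact myTwoRows13 (H 1 1).val (H 1 2).val (H 1 3).val (H 3 1).val (H 3 2).val (H 3 3).val
      (H 1 1).isLt (H 1 2).isLt (H 1 3).isLt (H 3 1).isLt (H 3 2).isLt (H 3 3).isLt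
      (hrv 1 1 (by decide)) (hrv 1 2 (by decide)) (hrv 1 3 (by decide))
      (hne 1 (by decide : (1:Fin 4) ≠ 2)) (hne 1 (by decide : (1:Fin 4) ≠ 3)) (hne 1 (by decide : (2:Fin 4) ≠ 3))
      (hrv 3 1 (by decide)) (hrv 3 2 (by decide)) (hrv 3 3 (by decide))
      (hne 3 (by decide : (1:Fin 4) ≠ 2)) (hne 3 (by decide : (1:Fin 4) ≠ 3)) (hne 3 (by decide : (2:Fin 4) ≠ 3))
      (hcv 2 1 (by decide)) (hcv 3 1 (by decide)) (hcv 1 3 (by decide)) (hcv 2 3 (by decide))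
      (cne 1 (by decide : (1:Fin 4) ≠ 3)) (cne 2 (by decide : (1:Fin 4) ≠ 3)) (cne 3 (by decide : (1:Fin 4) ≠ 3))
  have e23 : H 2 3 = H 3 2 := by
    apply Fin.val_injective
    exact myTwoRows23 (H 2 1).val (H 2 2).val (H 2 3).val (H 3 1).val (H 3 2).val (H 3 3).val
      (H 2 1).isLt (H 2 2).isLt (H 2 3).isLt (H 3 1).isLt (H 3 2).isLt (H 3 3).isLt
      (hrv 2 1 (by decide)) (hrv 2 2 (by decide)) (hrv 2 3 (by decide))
      (hne 2 (by decide : (1:Fin 4) ≠ 2)) (hne 2 (by decide : (1:Fin 4) ≠ 3)) (hne 2 (by decide : (2:Fin 4) ≠ 3))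
      (hrv 3 1 (by decide)) (hrv 3 2 (by decide)) (hrv 3 3 (by decide))
      (hne 3 (by decide : (1:Fin 4) ≠ 2)) (hne 3 (by decide : (1:Fin 4) ≠ 3)) (hne 3 (by decide : (2:Fin 4) ≠ 3))
      (hcv 1 2 (by decide)) (hcv 3 2 (by decide)) (hcv 1 3 (by decide)) (hcv 2 3 (by decide))
      (cne 1 (by decide : (2:Fin 4) ≠ 3)) (cne 2 (by decide : (2:Fin 4) ≠ 3)) (cne 3 (by decide : (2:Fin 4) ≠ 3))
  intro a b
  have ha : a = 0 ∨ a = 1 ∨ a = 2 ∨ a = 3 := by revert a; decide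
  have hb : b = 0 ∨ b = 1 ∨ b = 2 ∨ b = 3 := by revert b; decide
  rcases ha with rfl | rfl | rfl | rfl <;> rcases hb with rfl | rfl | rfl | rfl <;>
    first
      | rfl
      | (rw [h0, h0'])
      | (rw [h0', h0])
      | exact e12 | exact e12.symm
      | exact e13 | exact e13.symm
      | exact e23 | exact e23.symm

end Aux

section ColorFacts

variable {n : ℕ} {f : (Fin n → Fin 4) → Fin 4}

lemma myColorNormR (hnorm : Normalized f) {i j : Fin n} (hij : i ≠ j) (a : Fin 4) :
    colorOf f i j a 0 = a := by
  show f (fun t => if t = i then a else if t = j then 0 else 0) = a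
  have e : (fun t => if t = i then a else if t = j then (0:Fin 4) else 0)
      = (fun t => if t = i then a else 0) := by
    funext t; split_ifs <;> rfl
  rw [e]; exact hnorm i a

lemma myColorNormL (hnorm : Normalized f) {i j : Fin n} (hij : i ≠ j) (b : Fin 4) :
    colorOf f i j 0 b = b := by
  show f (fun t => if t = i then 0 else if t = j then b else 0) = b
  have e : (fun t => if t = i then (0:Fin 4) else if t = j then b else 0)
      = (fun t => if t = j then b else 0) := by
    funext t
    by_cases h1 : t = i
    · subst h1; rw [if_pos rfl, if_neg hij]
    · rw [if_neg h1]
  rw [e]; exact hnorm j b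

lemma myColorRowInj (hq : IsNQuasigroup f) {i j : Fin n} (hij : i ≠ j) (a : Fin 4) :
    Function.Injective (colorOf f i j a) := by
  have e : colorOf f i j a = fun b => f (Function.update (fun t => if t = i then a else 0) j b) := by
    funext b
    show f _ = f _
    apply congrArg f
    funext t
    by_cases h1 : t = j
    · subst h1; rw [Function.update_self, if_neg (Ne.symm hij), if_pos rfl]
    · rw [Function.update_of_ne h1]
      by_cases h2 : t = i <;> simp [h1, h2]
  rw [e]; exact (hq j _).injective

lemma myColorColInj (hq : IsNQuasigroup f) {i j : Fin n} (hij : i ≠ j) (b : Fin 4) :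
    Function.Injective (fun a => colorOf f i j a b) := by
  have e : (fun a => colorOf f i j a b)
      = fun a => f (Function.update (fun t => if t = j then b else 0) i a) := by
    funext a
    show f _ = f _
    apply congrArg f
    funext t
    by_cases h1 : t = i
    · subst h1; rw [Function.update_self, if_pos rfl]
    · rw [Function.update_of_ne h1, if_neg h1]
  rw [e]; exact (hq i _).injective

lemma myColorComm (hq : IsNQuasigroup f) (hnorm : Normalized f) {i j : Fin n} (hij : i ≠ j) :
    ∀ a b, colorOf f i j a b = colorOf f i j b a :=
  myBinComm (colorOf f i j) (fun a => myColorRowInj hq hij a) (fun b => myColorColInj hq hij b)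
    (myColorNormR hnorm hij) (myColorNormL hnorm hij)

lemma myColorSwap (hq : IsNQuasigroup f) (hnorm : Normalized f) {i j : Fin n} (hij : i ≠ j) :
    colorOf f i j = colorOf f j i := by
  funext a b
  have e : colorOf f j i a b = colorOf f i j b a := by
    show f _ = f _
    apply congrArg f
    funext t
    by_cases h1 : t = i <;> by_cases h2 : t = j
    · exact absurd (h1 ▸ h2 : i = j) hij
    · simp [h1, h2, hij, Ne.symm hij]
    · simp [h1, h2, hij, Ne.symm hij]
    · simp [h1, h2, hij, Ne.symm hij]
  rw [e, myColorComm hq hnorm hij]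

lemma myExtendTwo {k : ℕ} (f : (Fin n → Fin 4) → Fin 4) (ι : Fin k → Fin n)
    (hι : Function.Injective ι) (p q : Fin k) (a b : Fin 4) :
    PrincipalRetract f ι (fun _ => 0) (fun s => if s = p then a else if s = q then b else 0)
      = colorOf f (ι p) (ι q) a b := by
  show f _ = f _
  apply congrArg f
  funext t
  by_cases hmem : ∃ s, ι s = t
  · obtain ⟨s, rfl⟩ := hmem
    rw [hι.extend_apply]
    simp only [hι.eq_iff]
  · rw [Function.extend_apply' _ _ _ hmem]
    have h1 : t ≠ ι p := fun e => hmem ⟨p, e.symm⟩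
    have h2 : t ≠ ι q := fun e => hmem ⟨q, e.symm⟩
    simp [h1, h2]

end ColorFacts

section Tri

variable {n : ℕ}

lemma myTri (f : (Fin n → Fin 4) → Fin 4) (hnorm : Normalized f)
    (ι : Fin 3 → Fin n) (hι : Function.Injective ι)
    (hred : PermutablyReducible (PrincipalRetract f ι (fun _ => 0))) :
    ∃ r : Fin 3, ∀ p q : Fin 3, p ≠ r → q ≠ r →
      colorOf f (ι p) (ι r) = colorOf f (ι q) (ι r) := by
  obtain ⟨m, hm2, hm1, σ, g, h, hg, hh, heq⟩ := hred
  have hm : m = 2 := by omega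
  subst hm
  set r : Fin 3 := σ ⟨2, by omega⟩ with hr
  refine ⟨r, ?_⟩
  have key : ∀ v : Fin 3, v ≠ r → ∀ a x : Fin 4,
      colorOf f (ι v) (ι r) a x
        = h (Fin.cons (g fun k' : Fin 2 => if σ ⟨k'.val, by omega⟩ = v then a else 0)
            (fun _ : Fin (3 - 2) => x)) := by
    intro v hv a x
    rw [← myExtendTwo f ι hι v r a x, heq]
    refine congrArg h ?_
    funext t
    refine Fin.cases ?_ (fun j => ?_) t
    · show (g _) = (g _)
      refine congrArg g ?_
      funext k'
      have hDg : ∀ km : Fin 3, km.val < 2 →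
          (if σ km = v then a else if σ km = r then x else 0)
            = (if σ km = v then a else 0) := by
        intro km hkm
        have hkr : σ km ≠ r := by
          rw [hr]
          intro e
          have := congrArg Fin.val (σ.injective e)
          simp at this
          omega
        by_cases h1 : σ km = v
        · rw [if_pos h1, if_pos h1]
        · rw [if_neg h1, if_neg h1, if_neg hkr]
      exact hDg ⟨k'.val, by omega⟩ k'.isLt
    · show (if σ ⟨2 + j.val, by omega⟩ = v then a else if σ ⟨2 + j.val, by omega⟩ = r then x else 0) = x
      have hj : (⟨2 + j.val, by omega⟩ : Fin 3) = ⟨2, by omega⟩ := by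
        have := j.isLt
        apply Fin.ext
        simp only []
        omega
      have hsr : σ (⟨2 + j.val, by omega⟩ : Fin 3) = r := by rw [hj, hr]
      rw [hsr, if_neg (fun e => hv e.symm), if_pos rfl]
  have hinj : Function.Injective (fun z => h (Fin.cons z (fun _ : Fin (3 - 2) => (0 : Fin 4)))) := by
    have e : ∀ z : Fin 4, Fin.cons z (fun _ : Fin (3 - 2) => (0 : Fin 4))
        = Function.update (fun _ : Fin (3 - 2 + 1) => (0 : Fin 4)) 0 z := by
      intro z; funext t
      refine Fin.cases ?_ (fun j => ?_) t
      · simp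
      · rw [Fin.cons_succ, Function.update_of_ne (Fin.succ_ne_zero j)]
    intro z1 z2 hz
    refine (hh 0 (fun _ => 0)).injective ?_
    show h _ = h _
    rw [← e z1, ← e z2]
    exact hz
  have norm : ∀ v : Fin 3, v ≠ r → ∀ a : Fin 4,
      h (Fin.cons (g fun k' : Fin 2 => if σ ⟨k'.val, by omega⟩ = v then a else 0)
          (fun _ : Fin (3 - 2) => (0 : Fin 4))) = a :=
    fun v hv a => (key v hv a 0).symm.trans (myColorNormR hnorm (hι.ne hv) a)
  intro p q hp hq
  funext a x
  have hg2 : (g fun k' : Fin 2 => if σ ⟨k'.val, by omega⟩ = p then a else 0)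
      = (g fun k' : Fin 2 => if σ ⟨k'.val, by omega⟩ = q then a else 0) :=
    hinj ((norm p hp a).trans (norm q hq a).symm)
  exact (key p hp a x).trans
    ((congrArg (fun z => h (Fin.cons z (fun _ : Fin (3 - 2) => x))) hg2).trans
      (key q hq a x).symm)

end Tri

section Quad

variable {n : ℕ}

lemma myQuad (f : (Fin n → Fin 4) → Fin 4) (hnorm : Normalized f)
    (ι : Fin 4 → Fin n) (hι : Function.Injective ι)
    (hred : PermutablyReducible (PrincipalRetract f ι (fun _ => 0))) :
    (∃ r : Fin 4, ∀ p q : Fin 4, p ≠ r → q ≠ r →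
        colorOf f (ι p) (ι r) = colorOf f (ι q) (ι r)) ∨
    (∃ p q r s : Fin 4, p ≠ q ∧ p ≠ r ∧ p ≠ s ∧ q ≠ r ∧ q ≠ s ∧ r ≠ s ∧
        colorOf f (ι p) (ι r) = colorOf f (ι q) (ι r) ∧
        colorOf f (ι p) (ι s) = colorOf f (ι q) (ι s)) := by
  obtain ⟨m, hm2, hm1, σ, g, h, hg, hh, heq⟩ := hred
  have hm : m = 2 ∨ m = 3 := by omega
  rcases hm with hm | hm <;> subst hm
  · -- m = 2 : two pairs
    right
    have key2 : ∀ iv iw : Fin 4, iv.val < 2 → 2 ≤ iw.val → ∀ a x : Fin 4,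
        colorOf f (ι (σ iv)) (ι (σ iw)) a x
          = h (Fin.cons (g fun k' : Fin 2 => if σ ⟨k'.val, by omega⟩ = σ iv then a else 0)
              (fun j : Fin (4 - 2) => if 2 + j.val = iw.val then x else 0)) := by
      intro iv iw hiv hiw a x
      rw [← myExtendTwo f ι hι (σ iv) (σ iw) a x, heq]
      refine congrArg h ?_
      funext t
      refine Fin.cases ?_ (fun j => ?_) t
      · show (g _) = (g _)
        refine congrArg g ?_
        funext k'
        have hDg : ∀ km : Fin 4, km.val < 2 →
            (if σ km = σ iv then a else if σ km = σ iw then x else 0)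
              = (if σ km = σ iv then a else 0) := by
          intro km hkm
          have hkr : σ km ≠ σ iw := by
            intro e
            have := congrArg Fin.val (σ.injective e)
            omega
          by_cases h1 : σ km = σ iv
          · rw [if_pos h1, if_pos h1]
          · rw [if_neg h1, if_neg h1, if_neg hkr]
        exact hDg ⟨k'.val, by omega⟩ k'.isLt
      · have hDs : ∀ km : Fin 4, 2 ≤ km.val →
            (if σ km = σ iv then a else if σ km = σ iw then x else 0)
             = (if km.val = iw.val then x else 0) := by
          intro km hkm
          have h1 : σ km ≠ σ iv := by
            intro e
            have := congrArg Fin.val (σ.injective e)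
            omega
          rw [if_neg h1]
          by_cases h2 : km.val = iw.val
          · rw [if_pos (congrArg σ (Fin.ext h2)), if_pos h2]
          · rw [if_neg (fun e => h2 (congrArg Fin.val (σ.injective e))), if_neg h2]
        exact hDs ⟨2 + j.val, by omega⟩ (Nat.le_add_right 2 j.val)
    have hinj2 : Function.Injective
        (fun z => h (Fin.cons z (fun _ : Fin (4 - 2) => (0 : Fin 4)))) := by
      have e : ∀ z : Fin 4, Fin.cons z (fun _ : Fin (4 - 2) => (0 : Fin 4))
          = Function.update (fun _ : Fin (4 - 2 + 1) => (0 : Fin 4)) 0 z := by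
        intro z; funext t
        refine Fin.cases ?_ (fun j => ?_) t
        · simp
        · rw [Fin.cons_succ, Function.update_of_ne (Fin.succ_ne_zero j)]
      intro z1 z2 hz
      refine (hh 0 (fun _ => 0)).injective ?_
      show h _ = h _
      rw [← e z1, ← e z2]
      exact hz
    have tail0 : ∀ iw : Fin 4,
        (fun j : Fin (4 - 2) => if 2 + j.val = iw.val then (0 : Fin 4) else 0)
          = (fun _ : Fin (4 - 2) => (0 : Fin 4)) := by
      intro iw; funext j; split_ifs <;> rfl
    have norm2 : ∀ iv : Fin 4, iv.val < 2 → ∀ a : Fin 4,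
        h (Fin.cons (g fun k' : Fin 2 => if σ ⟨k'.val, by omega⟩ = σ iv then a else 0)
            (fun _ : Fin (4 - 2) => (0 : Fin 4))) = a := by
      intro iv hiv a
      have h1 := key2 iv ⟨2, by omega⟩ hiv (le_refl 2) a 0
      rw [tail0] at h1
      refine h1.symm.trans (myColorNormR hnorm ?_ a)
      exact hι.ne (σ.injective.ne (Fin.ne_of_val_ne (by show iv.val ≠ 2; omega)))
    have hφeq : ∀ a : Fin 4,
        (g fun k' : Fin 2 => if σ ⟨k'.val, by omega⟩ = σ ⟨0, by omega⟩ then a else 0)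
          = (g fun k' : Fin 2 => if σ ⟨k'.val, by omega⟩ = σ ⟨1, by omega⟩ then a else 0) :=
      fun a => hinj2 (((norm2 ⟨0, by omega⟩ (by decide) a)).trans
        (norm2 ⟨1, by omega⟩ (by decide) a).symm)
    refine ⟨σ ⟨0, by omega⟩, σ ⟨1, by omega⟩, σ ⟨2, by omega⟩, σ ⟨3, by omega⟩,
      σ.injective.ne (by decide), σ.injective.ne (by decide), σ.injective.ne (by decide),
      σ.injective.ne (by decide), σ.injective.ne (by decide), σ.injective.ne (by decide),
      ?_, ?_⟩
    · funext a x
      exact (key2 ⟨0, by omega⟩ ⟨2, by omega⟩ (by decide) (by decide) a x).trans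
        ((congrArg (fun z => h (Fin.cons z
            (fun j : Fin (4 - 2) => if 2 + j.val = ((⟨2, by omega⟩ : Fin 4)).val then x else 0))) (hφeq a)).trans
          (key2 ⟨1, by omega⟩ ⟨2, by omega⟩ (by decide) (by decide) a x).symm)
    · funext a x
      exact (key2 ⟨0, by omega⟩ ⟨3, by omega⟩ (by decide) (by decide) a x).trans
        ((congrArg (fun z => h (Fin.cons z
            (fun j : Fin (4 - 2) => if 2 + j.val = ((⟨3, by omega⟩ : Fin 4)).val then x else 0))) (hφeq a)).trans
          (key2 ⟨1, by omega⟩ ⟨3, by omega⟩ (by decide) (by decide) a x).symm)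
  · -- m = 3 : star
    left
    set r : Fin 4 := σ ⟨3, by omega⟩ with hr
    refine ⟨r, ?_⟩
    have key : ∀ v : Fin 4, v ≠ r → ∀ a x : Fin 4,
        colorOf f (ι v) (ι r) a x
          = h (Fin.cons (g fun k' : Fin 3 => if σ ⟨k'.val, by omega⟩ = v then a else 0)
              (fun _ : Fin (4 - 3) => x)) := by
      intro v hv a x
      rw [← myExtendTwo f ι hι v r a x, heq]
      refine congrArg h ?_
      funext t
      refine Fin.cases ?_ (fun j => ?_) t
      · show (g _) = (g _)
        refine congrArg g ?_
        funext k'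
        have hDg : ∀ km : Fin 4, km.val < 3 →
            (if σ km = v then a else if σ km = r then x else 0)
              = (if σ km = v then a else 0) := by
          intro km hkm
          have hkr : σ km ≠ r := by
            rw [hr]
            intro e
            have := congrArg Fin.val (σ.injective e)
            simp at this
            omega
          by_cases h1 : σ km = v
          · rw [if_pos h1, if_pos h1]
          · rw [if_neg h1, if_neg h1, if_neg hkr]
        exact hDg ⟨k'.val, by omega⟩ k'.isLt
      · show (if σ ⟨3 + j.val, by omega⟩ = v then a
            else if σ ⟨3 + j.val, by omega⟩ = r then x else 0) = x
        have hj : (⟨3 + j.val, by omega⟩ : Fin 4) = ⟨3, by omega⟩ := by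
          have := j.isLt
          apply Fin.ext
          simp only []
          omega
        have hsr : σ (⟨3 + j.val, by omega⟩ : Fin 4) = r := by rw [hj, hr]
        rw [hsr, if_neg (fun e => hv e.symm), if_pos rfl]
    have hinj : Function.Injective
        (fun z => h (Fin.cons z (fun _ : Fin (4 - 3) => (0 : Fin 4)))) := by
      have e : ∀ z : Fin 4, Fin.cons z (fun _ : Fin (4 - 3) => (0 : Fin 4))
          = Function.update (fun _ : Fin (4 - 3 + 1) => (0 : Fin 4)) 0 z := by
        intro z; funext t
        refine Fin.cases ?_ (fun j => ?_) t
        · simp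
        · rw [Fin.cons_succ, Function.update_of_ne (Fin.succ_ne_zero j)]
      intro z1 z2 hz
      refine (hh 0 (fun _ => 0)).injective ?_
      show h _ = h _
      rw [← e z1, ← e z2]
      exact hz
    have norm : ∀ v : Fin 4, v ≠ r → ∀ a : Fin 4,
        h (Fin.cons (g fun k' : Fin 3 => if σ ⟨k'.val, by omega⟩ = v then a else 0)
            (fun _ : Fin (4 - 3) => (0 : Fin 4))) = a :=
      fun v hv a => (key v hv a 0).symm.trans (myColorNormR hnorm (hι.ne hv) a)
    intro p q hp hq
    funext a x
    have hg2 : (g fun k' : Fin 3 => if σ ⟨k'.val, by omega⟩ = p then a else 0)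
        = (g fun k' : Fin 3 => if σ ⟨k'.val, by omega⟩ = q then a else 0) :=
      hinj ((norm p hp a).trans (norm q hq a).symm)
    exact (key p hp a x).trans
      ((congrArg (fun z => h (Fin.cons z (fun _ : Fin (4 - 3) => x))) hg2).trans
        (key q hq a x).symm)

end Quad

section Tables

def tbl {α : Type*} (x01 x02 x03 x12 x13 x23 : α) (u v : Fin 4) : α :=
  if u = 0 then (if v = 1 then x01 else if v = 2 then x02 else x03)
  else if u = 1 then (if v = 0 then x01 else if v = 2 then x12 else x13)
  else if u = 2 then (if v = 0 then x02 else if v = 1 then x12 else x23)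
  else (if v = 0 then x03 else if v = 1 then x13 else x23)

lemma tbl_cases {α : Type*} (x01 x02 x03 x12 x13 x23 : α) (u v : Fin 4) :
    tbl x01 x02 x03 x12 x13 x23 u v = x01 ∨ tbl x01 x02 x03 x12 x13 x23 u v = x02 ∨
    tbl x01 x02 x03 x12 x13 x23 u v = x03 ∨ tbl x01 x02 x03 x12 x13 x23 u v = x12 ∨
    tbl x01 x02 x03 x12 x13 x23 u v = x13 ∨ tbl x01 x02 x03 x12 x13 x23 u v = x23 := by
  unfold tbl; split_ifs <;> tauto

lemma tbl_decide_eq {α : Type*} [DecidableEq α] (x01 x02 x03 x12 x13 x23 c : α) (u v : Fin 4) :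
    tbl (decide (x01 = c)) (decide (x02 = c)) (decide (x03 = c)) (decide (x12 = c))
        (decide (x13 = c)) (decide (x23 = c)) u v
      = decide (tbl x01 x02 x03 x12 x13 x23 u v = c) := by
  unfold tbl; split_ifs <;> rfl

set_option maxHeartbeats 1000000 in
theorem boolCoreStar : ∀ b01 b02 b03 b12 b13 b23 : Bool,
    (cond b01 1 0 + cond b02 1 0 + cond b03 1 0 + cond b12 1 0 + cond b13 1 0 + cond b23 1 0 : ℕ) = 3 →
    ∀ t : Fin 4, (∀ p q : Fin 4, p ≠ t → q ≠ t →
        tbl b01 b02 b03 b12 b13 b23 p t = tbl b01 b02 b03 b12 b13 b23 q t) →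
    ∃ (t' : Fin 4) (val : Bool), ∀ u v : Fin 4, u ≠ t' → v ≠ t' → u ≠ v →
        tbl b01 b02 b03 b12 b13 b23 u v = val := by decide

set_option maxHeartbeats 4000000 in
theorem boolCorePair : ∀ b01 b02 b03 b12 b13 b23 : Bool,
    (cond b01 1 0 + cond b02 1 0 + cond b03 1 0 + cond b12 1 0 + cond b13 1 0 + cond b23 1 0 : ℕ) = 3 →
    ∀ p q r s : Fin 4, p ≠ q → p ≠ r → p ≠ s → q ≠ r → q ≠ s → r ≠ s →
    tbl b01 b02 b03 b12 b13 b23 p r = tbl b01 b02 b03 b12 b13 b23 q r →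
    tbl b01 b02 b03 b12 b13 b23 p s = tbl b01 b02 b03 b12 b13 b23 q s →
    ∃ (t' : Fin 4) (val : Bool), ∀ u v : Fin 4, u ≠ t' → v ≠ t' → u ≠ v →
        tbl b01 b02 b03 b12 b13 b23 u v = val := by decide

lemma myInj3 {n : ℕ} {x y z : Fin n} (hxy : x ≠ y) (hxz : x ≠ z) (hyz : y ≠ z) :
    Function.Injective ![x, y, z] := by
  intro u v e
  fin_cases u <;> fin_cases v <;>
    first
      | rfl
      | exact absurd (e : x = y) hxy | exact absurd (e : y = x) (Ne.symm hxy)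
      | exact absurd (e : x = z) hxz | exact absurd (e : z = x) (Ne.symm hxz)
      | exact absurd (e : y = z) hyz | exact absurd (e : z = y) (Ne.symm hyz)

lemma myInj4 {n : ℕ} {a b c d : Fin n} (hab : a ≠ b) (hac : a ≠ c) (had : a ≠ d)
    (hbc : b ≠ c) (hbd : b ≠ d) (hcd : c ≠ d) :
    Function.Injective ![a, b, c, d] := by
  intro u v e
  fin_cases u <;> fin_cases v <;>
    first
      | rfl
      | exact absurd (e : a = b) hab | exact absurd (e : b = a) (Ne.symm hab)
      | exact absurd (e : a = c) hac | exact absurd (e : c = a) (Ne.symm hac)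
      | exact absurd (e : a = d) had | exact absurd (e : d = a) (Ne.symm had)
      | exact absurd (e : b = c) hbc | exact absurd (e : c = b) (Ne.symm hbc)
      | exact absurd (e : b = d) hbd | exact absurd (e : d = b) (Ne.symm hbd)
      | exact absurd (e : c = d) hcd | exact absurd (e : d = c) (Ne.symm hcd)

end Tables

/-- Proposition 2.1 of §3: if `f` is a normalized `n`-quasigroup of
order 4 (`n ≥ 5`) all of whose principal 3- and 4-retracts are permutably
reducible, then the edge coloring `μ_f` of `Kₙ` satisfies conditions (A) and (B). -/
theorem stmt5 {n : ℕ} (hn : 5 ≤ n) (f : (Fin n → Fin 4) → Fin 4)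
    (hq : IsNQuasigroup f) (hnorm : Normalized f)
    (h3 : ∀ (ι : Fin 3 → Fin n), Function.Injective ι →
      ∀ c : Fin n → Fin 4, PermutablyReducible (PrincipalRetract f ι c))
    (h4 : ∀ (ι : Fin 4 → Fin n), Function.Injective ι →
      ∀ c : Fin n → Fin 4, PermutablyReducible (PrincipalRetract f ι c)) :
    CondA (colorOf f) ∧ CondB (colorOf f) := by
  constructor
  · -- Condition (A)
    intro x y z hxy hxz hyz
    have hι : Function.Injective ![x, y, z] := myInj3 hxy hxz hyz
    obtain ⟨r, hstar⟩ := myTri f hnorm ![x, y, z] hι (h3 _ hι (fun _ => 0))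
    fin_cases r
    · -- r = vertex x
      left
      have e := hstar 1 2 (by decide) (by decide)
      calc colorOf f x y = colorOf f y x := myColorSwap hq hnorm hxy
        _ = colorOf f z x := e
        _ = colorOf f x z := myColorSwap hq hnorm (Ne.symm hxz)
    · -- r = vertex y
      right; left
      have e := hstar 0 2 (by decide) (by decide)
      calc colorOf f x y = colorOf f z y := e
        _ = colorOf f y z := myColorSwap hq hnorm (Ne.symm hyz)
    · -- r = vertex z
      right; right
      exact hstar 0 1 (by decide) (by decide)
  · -- Condition (B)
    intro a b c d hab hac had hbc hbd hcd hex
    obtain ⟨c₁, c₂, hc12, h1, h2⟩ := hex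
    have hι : Function.Injective ![a, b, c, d] := myInj4 hab hac had hbc hbd hcd
    have hall := myMemTwo
      [colorOf f a b, colorOf f a c, colorOf f a d, colorOf f b c, colorOf f b d, colorOf f c d]
      hc12 (by rw [h1, h2]; rfl)
    have hlook : ∀ u v : Fin 4, u ≠ v →
        colorOf f (![a, b, c, d] u) (![a, b, c, d] v)
          = tbl (colorOf f a b) (colorOf f a c) (colorOf f a d)
              (colorOf f b c) (colorOf f b d) (colorOf f c d) u v := by
      intro u v huv
      fin_cases u <;> fin_cases v <;>
        first
          | exact absurd rfl huv
          | rfl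
          | exact myColorSwap hq hnorm (Ne.symm hab)
          | exact myColorSwap hq hnorm (Ne.symm hac)
          | exact myColorSwap hq hnorm (Ne.symm had)
          | exact myColorSwap hq hnorm (Ne.symm hbc)
          | exact myColorSwap hq hnorm (Ne.symm hbd)
          | exact myColorSwap hq hnorm (Ne.symm hcd)
    have hmem : ∀ u v : Fin 4, u ≠ v →
        tbl (colorOf f a b) (colorOf f a c) (colorOf f a d)
            (colorOf f b c) (colorOf f b d) (colorOf f c d) u v = c₁ ∨
        tbl (colorOf f a b) (colorOf f a c) (colorOf f a d)
            (colorOf f b c) (colorOf f b d) (colorOf f c d) u v = c₂ := by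
      intro u v huv
      rcases tbl_cases (colorOf f a b) (colorOf f a c) (colorOf f a d)
          (colorOf f b c) (colorOf f b d) (colorOf f c d) u v with e|e|e|e|e|e <;> rw [e] <;>
        exact hall _ (by simp)
    have hbc' : (cond (decide (colorOf f a b = c₁)) 1 0 + cond (decide (colorOf f a c = c₁)) 1 0
        + cond (decide (colorOf f a d = c₁)) 1 0 + cond (decide (colorOf f b c = c₁)) 1 0
        + cond (decide (colorOf f b d = c₁)) 1 0 + cond (decide (colorOf f c d = c₁)) 1 0 : ℕ)
          = 3 := by
      simp only [List.count_cons, List.count_nil, beq_iff_eq, Bool.cond_decide] at h1 ⊢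
      split_ifs at h1 ⊢ <;> omega
    -- common finishing step
    have finish : ∀ t' : Fin 4, ∀ val : Bool,
        (∀ u v : Fin 4, u ≠ t' → v ≠ t' → u ≠ v →
          tbl (decide (colorOf f a b = c₁)) (decide (colorOf f a c = c₁))
            (decide (colorOf f a d = c₁)) (decide (colorOf f b c = c₁))
            (decide (colorOf f b d = c₁)) (decide (colorOf f c d = c₁)) u v = val) →
        ((colorOf f a b = colorOf f a c ∧ colorOf f a c = colorOf f b c) ∨
         (colorOf f a b = colorOf f a d ∧ colorOf f a d = colorOf f b d) ∨
         (colorOf f a c = colorOf f a d ∧ colorOf f a d = colorOf f c d) ∨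
         (colorOf f b c = colorOf f b d ∧ colorOf f b d = colorOf f c d)) := by
      intro t' val hmono
      have hcol : ∀ u v : Fin 4, u ≠ t' → v ≠ t' → u ≠ v →
          colorOf f (![a, b, c, d] u) (![a, b, c, d] v) = cond val c₁ c₂ := by
        intro u v h1' h2' h3'
        have hb := hmono u v h1' h2' h3'
        rw [tbl_decide_eq] at hb
        rw [hlook u v h3']
        cases val with
        | true => exact of_decide_eq_true hb
        | false =>
          rcases hmem u v h3' with e | e
          · rw [e] at hb; simp at hb
          · exact e
      fin_cases t'
      · exact Or.inr (Or.inr (Or.inr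
          ⟨(hcol 1 2 (by decide) (by decide) (by decide)).trans
            (hcol 1 3 (by decide) (by decide) (by decide)).symm,
           (hcol 1 3 (by decide) (by decide) (by decide)).trans
            (hcol 2 3 (by decide) (by decide) (by decide)).symm⟩))
      · exact Or.inr (Or.inr (Or.inl
          ⟨(hcol 0 2 (by decide) (by decide) (by decide)).trans
            (hcol 0 3 (by decide) (by decide) (by decide)).symm,
           (hcol 0 3 (by decide) (by decide) (by decide)).trans
            (hcol 2 3 (by decide) (by decide) (by decide)).symm⟩))
      · exact Or.inr (Or.inl
          ⟨(hcol 0 1 (by decide) (by decide) (by decide)).trans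
            (hcol 0 3 (by decide) (by decide) (by decide)).symm,
           (hcol 0 3 (by decide) (by decide) (by decide)).trans
            (hcol 1 3 (by decide) (by decide) (by decide)).symm⟩)
      · exact Or.inl
          ⟨(hcol 0 1 (by decide) (by decide) (by decide)).trans
            (hcol 0 2 (by decide) (by decide) (by decide)).symm,
           (hcol 0 2 (by decide) (by decide) (by decide)).trans
            (hcol 1 2 (by decide) (by decide) (by decide)).symm⟩
    rcases myQuad f hnorm ![a, b, c, d] hι (h4 _ hι (fun _ => 0)) with
      ⟨r, hstar⟩ | ⟨p, q, r, s, hpq, hpr, hps, hqr, hqs, hrs, E1, E2⟩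
    · -- star case
      have hbstar : ∀ p q : Fin 4, p ≠ r → q ≠ r →
          tbl (decide (colorOf f a b = c₁)) (decide (colorOf f a c = c₁))
            (decide (colorOf f a d = c₁)) (decide (colorOf f b c = c₁))
            (decide (colorOf f b d = c₁)) (decide (colorOf f c d = c₁)) p r
          = tbl (decide (colorOf f a b = c₁)) (decide (colorOf f a c = c₁))
            (decide (colorOf f a d = c₁)) (decide (colorOf f b c = c₁))
            (decide (colorOf f b d = c₁)) (decide (colorOf f c d = c₁)) q r := by
        intro p q hp hq'
        rw [tbl_decide_eq, tbl_decide_eq,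
          (hlook p r hp).symm.trans ((hstar p q hp hq').trans (hlook q r hq'))]
      obtain ⟨t', val, hmono⟩ := boolCoreStar _ _ _ _ _ _ hbc' r hbstar
      exact finish t' val hmono
    · -- pair case
      have E1' := (hlook p r hpr).symm.trans (E1.trans (hlook q r hqr))
      have E2' := (hlook p s hps).symm.trans (E2.trans (hlook q s hqs))
      obtain ⟨t', val, hmono⟩ := boolCorePair _ _ _ _ _ _ hbc' p q r s hpq hpr hps hqr hqs hrs
        (by rw [tbl_decide_eq, tbl_decide_eq, E1']) (by rw [tbl_decide_eq, tbl_decide_eq, E2'])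
      exact finish t' val hmono
end

section
/- Let μ be an edge coloring of the complete graph Kₙ satisfying: (A) every triangle receives at most 2 colors, and (B) every 4-clique colored with exactly 2 colors, 3 edges of each, contains a monochromatic triangle. Then for every four pairwise distinct vertices a,b,c,d, if μ(ab)=μ(ac) ≠ μ(bc)=μ(bd) ≠ μ(cd), then μ(ad)=μ(ab). -/
/-- Proposition 3.2: under conditions (A) and (B), for pairwise
distinct vertices `a,b,c,d`, the relations
`μ(ab)=μ(ac) ≠ μ(bc)=μ(bd) ≠ μ(cd)` imply `μ(ad)=μ(ab)`. -/
theorem stmt6 {n : ℕ} {C : Type*} [DecidableEq C] (μ : Fin n → Fin n → C)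
    (hsym : ∀ a b, μ a b = μ b a) (hA : CondA μ) (hB : CondB μ)
    (a b c d : Fin n) (hab : a ≠ b) (hac : a ≠ c) (had : a ≠ d)
    (hbc : b ≠ c) (hbd : b ≠ d) (hcd : c ≠ d)
    (h1 : μ a b = μ a c) (h2 : μ a c ≠ μ b c)
    (h3 : μ b c = μ b d) (h4 : μ b d ≠ μ c d) :
    μ a d = μ a b := by
  have hXY : μ a b ≠ μ b c := fun h => h2 (h1.symm.trans h)
  rcases hA a b d hab had hbd with h | h | h
  · exact h.symm
  · exact absurd (h1.symm.trans (h.trans h3.symm)) h2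
  · -- μ a d = μ b d
    have hadY : μ a d = μ b c := h.trans h3.symm
    have hcdX : μ a c = μ c d := by
      rcases hA a c d hac had hcd with h' | h' | h'
      · exact absurd (h'.trans (hadY)) h2
      · exact h'
      · exact absurd (h.symm.trans h') h4
    exfalso
    have hcd' : μ c d = μ a b := (h1.trans hcdX).symm
    have hac' : μ a c = μ a b := h1.symm
    have hbd' : μ b d = μ b c := h3.symm
    have := hB a b c d hab hac had hbc hbd hcd
      ⟨μ a b, μ b c, hXY, by
        rw [hcd', hac', hadY, hbd']
        simp [List.count_cons, hXY, hXY.symm], by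
        rw [hcd', hac', hadY, hbd']
        simp [List.count_cons, hXY, hXY.symm]⟩
    rcases this with ⟨_, h'⟩ | ⟨h', _⟩ | ⟨h', _⟩ | ⟨_, h'⟩
    · exact h2 h'
    · exact hXY (h'.trans hadY)
    · exact h2 (h'.trans hadY)
    · exact h4 h'
end

section
/- Let μ be an edge coloring of the complete graph Kₙ (n ≥ 2) satisfying conditions (A) and (B). Then Kₙ contains an inner edge, i.e., an edge xy such that μ(xz) = μ(yz) for every vertex z different from x and y. -/
section Aux
variable {V : Type*} {C : Type*} [DecidableEq V] [DecidableEq C]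

lemma k4_lemma (μ : V → V → C)
    (hA : ∀ a b c : V, a ≠ b → a ≠ c → b ≠ c →
      μ a b = μ a c ∨ μ a b = μ b c ∨ μ a c = μ b c)
    (hB : ∀ a b c d : V, a ≠ b → a ≠ c → a ≠ d → b ≠ c → b ≠ d → c ≠ d →
      (∃ c₁ c₂ : C, c₁ ≠ c₂ ∧
        [μ a b, μ a c, μ a d, μ b c, μ b d, μ c d].count c₁ = 3 ∧
        [μ a b, μ a c, μ a d, μ b c, μ b d, μ c d].count c₂ = 3) →
      ((μ a b = μ a c ∧ μ a c = μ b c) ∨ (μ a b = μ a d ∧ μ a d = μ b d) ∨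
       (μ a c = μ a d ∧ μ a d = μ c d) ∨ (μ b c = μ b d ∧ μ b d = μ c d)))
    {v u p w : V} {c d : C}
    (hvu : v ≠ u) (hvp : v ≠ p) (hvw : v ≠ w) (hup : u ≠ p) (huw : u ≠ w) (hpw : p ≠ w)
    (h1 : μ v u = d) (h2 : μ v p = d) (h3 : μ v w = c) (h4 : μ u p = c)
    (h5 : μ p w = c) (hdc : d ≠ c) : μ u w = c := by
  rcases hA v u w hvu hvw huw with h | h | h
  · exact absurd (h1 ▸ h3 ▸ h : d = c) hdc
  · -- μ v u = μ u w, so μ u w = d; contradiction via hB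
    have huwd : μ u w = d := by rw [← h, h1]
    exfalso
    have hcount : ∃ c₁ c₂ : C, c₁ ≠ c₂ ∧
        [μ v u, μ v p, μ v w, μ u p, μ u w, μ p w].count c₁ = 3 ∧
        [μ v u, μ v p, μ v w, μ u p, μ u w, μ p w].count c₂ = 3 := by
      refine ⟨d, c, hdc, ?_, ?_⟩ <;>
        simp [h1, h2, h3, h4, h5, huwd, List.count_cons, hdc, Ne.symm hdc]
    rcases hB v u p w hvu hvp hvw hup huw hpw hcount with ⟨e1, e2⟩ | ⟨e1, e2⟩ | ⟨e1, e2⟩ | ⟨e1, e2⟩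
    · exact hdc (by rw [← h2, e2, h4])
    · exact hdc (by rw [← h1, e1, h3])
    · exact hdc (by rw [← h2, e1, h3])
    · exact hdc (by rw [← huwd, e2, h5])
  · rw [← h, h3]

lemma partL (μ : V → V → C) (hsym : ∀ a b, μ a b = μ b a)
    (hA : ∀ a b c : V, a ≠ b → a ≠ c → b ≠ c →
      μ a b = μ a c ∨ μ a b = μ b c ∨ μ a c = μ b c)
    (hB : ∀ a b c d : V, a ≠ b → a ≠ c → a ≠ d → b ≠ c → b ≠ d → c ≠ d →
      (∃ c₁ c₂ : C, c₁ ≠ c₂ ∧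
        [μ a b, μ a c, μ a d, μ b c, μ b d, μ c d].count c₁ = 3 ∧
        [μ a b, μ a c, μ a d, μ b c, μ b d, μ c d].count c₂ = 3) →
      ((μ a b = μ a c ∧ μ a c = μ b c) ∨ (μ a b = μ a d ∧ μ a d = μ b d) ∨
       (μ a c = μ a d ∧ μ a d = μ c d) ∨ (μ b c = μ b d ∧ μ b d = μ c d))) :
    ∀ (k : ℕ) (T : Finset V), T.card = k → 2 ≤ T.card →
      ∃ (S : Finset V) (c : C), S ⊆ T ∧ S.Nonempty ∧ (T \ S).Nonempty ∧
        ∀ u ∈ S, ∀ w ∈ T \ S, μ u w = c := by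
  intro k
  induction k using Nat.strong_induction_on with
  | _ k IH =>
  intro T hTk hT2
  have hpos : 0 < T.card := by omega
  obtain ⟨v, hv⟩ := Finset.card_pos.mp hpos
  by_cases hT3 : 3 ≤ T.card
  · -- inductive case
    have hcard' : (T.erase v).card = k - 1 := by
      rw [Finset.card_erase_of_mem hv]; omega
    obtain ⟨S', c, hS'T, ⟨x1, hx1⟩, ⟨x2, hx2⟩, hcross⟩ :=
      IH (k - 1) (by omega) (T.erase v) hcard' (by omega)
    have hS'mem : ∀ u ∈ S', u ∈ T ∧ u ≠ v := fun u hu =>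
      ⟨Finset.mem_of_mem_erase (hS'T hu), Finset.ne_of_mem_erase (hS'T hu)⟩
    have hV2mem : ∀ w ∈ T.erase v \ S', w ∈ T ∧ w ≠ v ∧ w ∉ S' := fun w hw => by
      have h' := Finset.mem_sdiff.mp hw
      exact ⟨Finset.mem_of_mem_erase h'.1, Finset.ne_of_mem_erase h'.1, h'.2⟩
    by_cases hc2 : ∀ w ∈ T.erase v \ S', μ v w = c
    · -- put v with S'
      refine ⟨insert v S', c, ?_, ⟨v, Finset.mem_insert_self _ _⟩, ⟨x2, ?_⟩, ?_⟩
      · intro a ha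
        rcases Finset.mem_insert.mp ha with rfl | h
        · exact hv
        · exact (hS'mem a h).1
      · obtain ⟨h1, h2, h3⟩ := hV2mem x2 hx2
        exact Finset.mem_sdiff.mpr ⟨h1, by simp [Finset.mem_insert, h2, h3]⟩
      · intro u hu w hw
        obtain ⟨hwT, hwn⟩ := Finset.mem_sdiff.mp hw
        simp only [Finset.mem_insert, not_or] at hwn
        have hw' : w ∈ T.erase v \ S' :=
          Finset.mem_sdiff.mpr ⟨Finset.mem_erase.mpr ⟨hwn.1, hwT⟩, hwn.2⟩
        rcases Finset.mem_insert.mp hu with rfl | h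
        · exact hc2 w hw'
        · exact hcross u h w hw'
    · by_cases hc1 : ∀ u ∈ S', μ v u = c
      · -- put v with the complement
        refine ⟨S', c, fun a ha => (hS'mem a ha).1, ⟨x1, hx1⟩,
          ⟨v, Finset.mem_sdiff.mpr ⟨hv, fun h => (hS'mem v h).2 rfl⟩⟩, ?_⟩
        intro u hu w hw
        obtain ⟨hwT, hwn⟩ := Finset.mem_sdiff.mp hw
        by_cases hwv : w = v
        · subst hwv; rw [hsym]; exact hc1 u hu
        · exact hcross u hu w (Finset.mem_sdiff.mpr ⟨Finset.mem_erase.mpr ⟨hwv, hwT⟩, hwn⟩)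
      · push_neg at hc1 hc2
        obtain ⟨u1, hu1S, hu1c⟩ := hc1
        obtain ⟨u2, hu2S, hu2c⟩ := hc2
        obtain ⟨hu1T, hu1v⟩ := hS'mem u1 hu1S
        obtain ⟨hu2T, hu2v, hu2nS⟩ := hV2mem u2 hu2S
        have hu12 : u1 ≠ u2 := fun h => hu2nS (h ▸ hu1S)
        set d := μ v u2 with hd
        have hdc : d ≠ c := hu2c
        have hcross12 : μ u1 u2 = c := hcross u1 hu1S u2 hu2S
        have hu1d : μ v u1 = d := by
          rcases hA v u1 u2 (Ne.symm hu1v) (Ne.symm hu2v) hu12 with h | h | h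
          · exact h
          · exact absurd (h.trans hcross12) hu1c
          · exact absurd (h.trans hcross12) hdc
        have hstar : ∀ u ∈ T.erase v, μ v u ≠ c → μ v u = d := by
          intro u hu hne
          by_cases huS : u ∈ S'
          · have huu2 : u ≠ u2 := fun h => hu2nS (h ▸ huS)
            rcases hA v u u2 (Ne.symm (Finset.ne_of_mem_erase hu)) (Ne.symm hu2v) huu2
              with h | h | h
            · exact h
            · exact absurd (h.trans (hcross u huS u2 hu2S)) hne
            · exact absurd (h.trans (hcross u huS u2 hu2S)) hdc
          · have hu' : u ∈ T.erase v \ S' := Finset.mem_sdiff.mpr ⟨hu, huS⟩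
            have hcu : μ u u1 = c := by rw [hsym]; exact hcross u1 hu1S u hu'
            have huu1 : u ≠ u1 := fun h => huS (h ▸ hu1S)
            rcases hA v u u1 (Ne.symm (Finset.ne_of_mem_erase hu)) (Ne.symm hu1v) huu1
              with h | h | h
            · rw [h, hu1d]
            · exact absurd (h.trans hcu) hne
            · exact absurd (h.trans hcu) (hu1d ▸ hdc)
        by_cases hall : ∀ u ∈ T.erase v, μ v u ≠ c
        · -- all edges at v colored d
          refine ⟨({v} : Finset V), d, by simpa using hv, ⟨v, Finset.mem_singleton_self v⟩,
            ⟨u1, Finset.mem_sdiff.mpr ⟨hu1T, by simpa using hu1v⟩⟩, ?_⟩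
          intro a ha w hw
          rw [Finset.mem_singleton] at ha
          rw [ha]
          obtain ⟨hwT, hwv⟩ := Finset.mem_sdiff.mp hw
          rw [Finset.mem_singleton] at hwv
          have hw' : w ∈ T.erase v := Finset.mem_erase.mpr ⟨hwv, hwT⟩
          exact hstar w hw' (hall w hw')
        · push_neg at hall
          obtain ⟨r, hrT', hrc⟩ := hall
          set A := (T.erase v).filter (fun u => μ v u ≠ c) with hAdef
          refine ⟨insert v A, c, ?_, ⟨v, Finset.mem_insert_self _ _⟩, ⟨r, ?_⟩, ?_⟩
          · intro a ha
            rcases Finset.mem_insert.mp ha with rfl | h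
            · exact hv
            · exact Finset.mem_of_mem_erase (Finset.mem_filter.mp h).1
          · refine Finset.mem_sdiff.mpr ⟨Finset.mem_of_mem_erase hrT', ?_⟩
            simp only [Finset.mem_insert, not_or]
            refine ⟨Finset.ne_of_mem_erase hrT', ?_⟩
            intro h
            exact (Finset.mem_filter.mp h).2 hrc
          · intro u hu w hw
            obtain ⟨hwT, hwn⟩ := Finset.mem_sdiff.mp hw
            simp only [Finset.mem_insert, not_or] at hwn
            have hwT' : w ∈ T.erase v := Finset.mem_erase.mpr ⟨hwn.1, hwT⟩
            have hwc : μ v w = c := by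
              by_contra h
              exact hwn.2 (Finset.mem_filter.mpr ⟨hwT', h⟩)
            rcases Finset.mem_insert.mp hu with rfl | h
            · exact hwc
            · obtain ⟨huT', hunc⟩ := Finset.mem_filter.mp h
              have hud : μ v u = d := hstar u huT' hunc
              have huv : u ≠ v := Finset.ne_of_mem_erase huT'
              have hwv : w ≠ v := hwn.1
              have huw : u ≠ w := fun h => hunc (h ▸ hwc)
              by_cases huS : u ∈ S'
              · by_cases hwS : w ∈ S'
                · -- both in S' : K4 with p = u2
                  have huu2 : u ≠ u2 := fun h => hu2nS (h ▸ huS)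
                  have hwu2 : u2 ≠ w := fun h => hu2nS (h ▸ hwS)
                  exact k4_lemma μ hA hB (Ne.symm huv) (Ne.symm hu2v) (Ne.symm hwv)
                    huu2 huw hwu2 hud rfl hwc (hcross u huS u2 hu2S)
                    (by rw [hsym]; exact hcross w hwS u2 hu2S) hdc
                · exact hcross u huS w (Finset.mem_sdiff.mpr ⟨hwT', hwS⟩)
              · have hu' : u ∈ T.erase v \ S' := Finset.mem_sdiff.mpr ⟨huT', huS⟩
                by_cases hwS : w ∈ S'
                · rw [hsym]; exact hcross w hwS u hu'
                · -- both in complement : K4 with p = u1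
                  have hw' : w ∈ T.erase v \ S' := Finset.mem_sdiff.mpr ⟨hwT', hwS⟩
                  have huu1 : u ≠ u1 := fun h => huS (h ▸ hu1S)
                  have hwu1 : u1 ≠ w := fun h => hwS (h ▸ hu1S)
                  exact k4_lemma μ hA hB (Ne.symm huv) (Ne.symm hu1v) (Ne.symm hwv)
                    huu1 huw hwu1 hud hu1d hwc
                    (by rw [hsym]; exact hcross u1 hu1S u hu')
                    (hcross u1 hu1S w hw') hdc
  · -- base case: T.card = 2
    have h2 : T.card = 2 := by omega
    obtain ⟨a, b, hab, rfl⟩ := Finset.card_eq_two.mp h2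
    refine ⟨({a} : Finset V), μ a b, by simp, ⟨a, Finset.mem_singleton_self a⟩,
      ⟨b, Finset.mem_sdiff.mpr ⟨by simp, by simp [hab.symm]⟩⟩, ?_⟩
    intro u hu w hw
    rw [Finset.mem_singleton] at hu; subst hu
    obtain ⟨hwT, hwn⟩ := Finset.mem_sdiff.mp hw
    rw [Finset.mem_singleton] at hwn
    have : w = b := by
      rcases Finset.mem_insert.mp hwT with rfl | h
      · exact absurd rfl hwn
      · exact Finset.mem_singleton.mp h
    rw [this]

lemma mainL (μ : V → V → C) (hsym : ∀ a b, μ a b = μ b a)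
    (hA : ∀ a b c : V, a ≠ b → a ≠ c → b ≠ c →
      μ a b = μ a c ∨ μ a b = μ b c ∨ μ a c = μ b c)
    (hB : ∀ a b c d : V, a ≠ b → a ≠ c → a ≠ d → b ≠ c → b ≠ d → c ≠ d →
      (∃ c₁ c₂ : C, c₁ ≠ c₂ ∧
        [μ a b, μ a c, μ a d, μ b c, μ b d, μ c d].count c₁ = 3 ∧
        [μ a b, μ a c, μ a d, μ b c, μ b d, μ c d].count c₂ = 3) →
      ((μ a b = μ a c ∧ μ a c = μ b c) ∨ (μ a b = μ a d ∧ μ a d = μ b d) ∨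
       (μ a c = μ a d ∧ μ a d = μ c d) ∨ (μ b c = μ b d ∧ μ b d = μ c d))) :
    ∀ (k : ℕ) (T : Finset V), T.card = k → 2 ≤ T.card →
      ∃ x ∈ T, ∃ y ∈ T, x ≠ y ∧ ∀ z ∈ T, z ≠ x → z ≠ y → μ x z = μ y z := by
  intro k
  induction k using Nat.strong_induction_on with
  | _ k IH =>
  intro T hTk hT2
  obtain ⟨S, c, hST, ⟨x, hxS⟩, ⟨y, hyS⟩, hcross⟩ := partL μ hsym hA hB T.card T rfl hT2
  have hyT := (Finset.mem_sdiff.mp hyS).1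
  have hynS := (Finset.mem_sdiff.mp hyS).2
  have hSlt : S.card < k := hTk ▸ Finset.card_lt_card ⟨hST, fun h => hynS (h hyT)⟩
  have hTSlt : (T \ S).card < k := hTk ▸ Finset.card_lt_card
    ⟨Finset.sdiff_subset, fun h => (Finset.mem_sdiff.mp (h (hST hxS))).2 hxS⟩
  by_cases h1 : 2 ≤ S.card
  · obtain ⟨x', hx'S, y', hy'S, hne, hinner⟩ := IH S.card hSlt S rfl h1
    refine ⟨x', hST hx'S, y', hST hy'S, hne, ?_⟩
    intro z hzT hzx hzy
    by_cases hzS : z ∈ S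
    · exact hinner z hzS hzx hzy
    · rw [hcross x' hx'S z (Finset.mem_sdiff.mpr ⟨hzT, hzS⟩),
        hcross y' hy'S z (Finset.mem_sdiff.mpr ⟨hzT, hzS⟩)]
  · by_cases h2 : 2 ≤ (T \ S).card
    · obtain ⟨x', hx'S, y', hy'S, hne, hinner⟩ := IH (T \ S).card hTSlt (T \ S) rfl h2
      refine ⟨x', (Finset.mem_sdiff.mp hx'S).1, y', (Finset.mem_sdiff.mp hy'S).1, hne, ?_⟩
      intro z hzT hzx hzy
      by_cases hzS : z ∈ S
      · rw [hsym x' z, hcross z hzS x' hx'S, hsym y' z, hcross z hzS y' hy'S]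
      · exact hinner z (Finset.mem_sdiff.mpr ⟨hzT, hzS⟩) hzx hzy
    · refine ⟨x, hST hxS, y, hyT, fun h => hynS (h ▸ hxS), ?_⟩
      intro z hzT hzx hzy
      exfalso
      by_cases hzS : z ∈ S
      · exact hzx (Finset.card_le_one.mp (by omega) z hzS x hxS)
      · exact hzy (Finset.card_le_one.mp (by omega) z (Finset.mem_sdiff.mpr ⟨hzT, hzS⟩) y hyS)

end Aux



/-- Proposition 3.4: an edge coloring of `Kₙ` (`n ≥ 2`) satisfying
(A) and (B) admits an inner edge. -/
theorem stmt7 {n : ℕ} (hn : 2 ≤ n) {C : Type*} [DecidableEq C]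
    (μ : Fin n → Fin n → C)
    (hsym : ∀ a b, μ a b = μ b a) (hA : CondA μ) (hB : CondB μ) :
    ∃ x y : Fin n, x ≠ y ∧ ∀ z : Fin n, z ≠ x → z ≠ y → μ x z = μ y z := by
  have hcard : 2 ≤ (Finset.univ : Finset (Fin n)).card := by simpa using hn
  obtain ⟨x, _, y, _, hne, h⟩ :=
    mainL μ hsym hA hB (Finset.univ : Finset (Fin n)).card Finset.univ rfl hcard
  exact ⟨x, y, hne, fun z hzx hzy => h z (Finset.mem_univ z) hzx hzy⟩
end

section
/- Let μ be an edge coloring of Kₙ (n ≥ 3) by the four normalized binary quasigroups of order 4 satisfying conditions (A) and (B). Then there exists a completely reducible normalized n-quasigroup f of order 4 with μ_f = μ, i.e., f(0,…,xᵢ,…,xⱼ,…,0) = xᵢ μ(xᵢxⱼ) xⱼ for all i < j. -/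
/-- Complete reducibility: `f` is permutably reducible and so are all its
principal retracts of arity more than 2. -/
def CompletelyReducible {n : ℕ} (f : (Fin n → Fin 4) → Fin 4) : Prop :=
  PermutablyReducible f ∧
  ∀ (k : ℕ), 3 ≤ k → k ≤ n → ∀ (ι : Fin k → Fin n), Function.Injective ι →
    ∀ c : Fin n → Fin 4, PermutablyReducible (PrincipalRetract f ι c)

-- finite helper
lemma fin4_aux : ∀ a b : Fin 4, a ≠ 0 → b ≠ 0 → a ≠ b →
    ∃ c : Fin 4, c ≠ 0 ∧ c ≠ a ∧ c ≠ b ∧ ∀ x : Fin 4, x = 0 ∨ x = a ∨ x = b ∨ x = c := by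
  decide

lemma comm4 {op : Fin 4 → Fin 4 → Fin 4} (h : IsBinaryQG op)
    (h1 : ∀ x, op x 0 = x) (h2 : ∀ x, op 0 x = x) : ∀ a b, op a b = op b a := by
  obtain ⟨hrow, hcol⟩ := h
  -- key claim: for a b distinct nonzero, op a b = 0 → op b a = 0
  have key : ∀ a b : Fin 4, a ≠ 0 → b ≠ 0 → a ≠ b → op a b = 0 → op b a = 0 := by
    intro a b ha hb hab hab0
    by_contra hba
    obtain ⟨c, hc0, hca, hcb, hall⟩ := fin4_aux a b ha hb hab
    -- op b a ≠ b : op b a = b = op b 0 → a = 0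
    have e1 : op b a ≠ b := fun e => ha ((hrow b).1 (e.trans (h1 b).symm))
    -- op b a ≠ a : op b a = a = op 0 a → b = 0
    have e2 : op b a ≠ a := fun e => hb ((hcol a).1 (e.trans (h2 a).symm))
    have hbac : op b a = c := by rcases hall (op b a) with h|h|h|h <;> tauto
    -- op a a ≠ 0 : op a a = 0 = op a b → a = b
    have f1 : op a a ≠ 0 := fun e => hab ((hrow a).1 (e.trans hab0.symm))
    have f2 : op a a ≠ a := fun e => ha ((hrow a).1 (e.trans (h1 a).symm))
    -- op a a ≠ c : op a a = c = op b a → a = b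
    have f3 : op a a ≠ c := fun e => hab ((hcol a).1 (e.trans hbac.symm))
    have haab : op a a = b := by rcases hall (op a a) with h|h|h|h <;> tauto
    -- op a c
    have g1 : op a c ≠ a := fun e => hc0 ((hrow a).1 (e.trans (h1 a).symm))
    have g2 : op a c ≠ 0 := fun e => (hcb ((hrow a).1 (e.trans hab0.symm))).elim
    have g3 : op a c ≠ b := fun e => hca ((hrow a).1 (e.trans haab.symm))
    have g4 : op a c = c := by rcases hall (op a c) with h|h|h|h <;> tauto
    exact ha ((hcol c).1 (g4.trans (h2 c).symm))
  intro a b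
  by_cases ha : a = 0
  · subst ha; rw [h1, h2]
  by_cases hb : b = 0
  · subst hb; rw [h1, h2]
  by_cases hab : a = b
  · subst hab; rfl
  obtain ⟨c, hc0, hca, hcb, hall⟩ := fin4_aux a b ha hb hab
  by_cases z1 : op a b = 0
  · rw [z1, key a b ha hb hab z1]
  by_cases z2 : op b a = 0
  · rw [z2, key b a hb ha (Ne.symm hab) z2] 
  · -- both nonzero, both ∉ {a, b}, hence both = c
    have e1 : op a b ≠ a := fun e => hb ((hrow a).1 (e.trans (h1 a).symm))
    have e2 : op a b ≠ b := fun e => ha ((hcol b).1 (e.trans (h2 b).symm))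
    have e3 : op b a ≠ b := fun e => ha ((hrow b).1 (e.trans (h1 b).symm))
    have e4 : op b a ≠ a := fun e => hb ((hcol a).1 (e.trans (h2 a).symm))
    have q1 : op a b = c := by rcases hall (op a b) with h|h|h|h <;> tauto
    have q2 : op b a = c := by rcases hall (op b a) with h|h|h|h <;> tauto
    rw [q1, q2]


lemma split {n : ℕ} {C : Type*} [DecidableEq C] (μ : Fin n → Fin n → C)
    (hsym : ∀ i j, μ i j = μ j i) (hA : CondA μ) (hB : CondB μ) :
    ∀ (s : Finset (Fin n)), 2 ≤ s.card →
    ∃ (P Q : Finset (Fin n)) (c : C),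
      P.Nonempty ∧ Q.Nonempty ∧ Disjoint P Q ∧ P ∪ Q = s ∧
      ∀ i ∈ P, ∀ j ∈ Q, μ i j = c := by
  intro s
  induction s using Finset.strongInduction with
  | _ s IH =>
    intro hs2
    by_cases hs3 : 3 ≤ s.card
    · -- inductive case
      obtain ⟨v, hv⟩ := Finset.card_pos.mp (show 0 < s.card by omega)
      set s' := s.erase v with hs'
      have hvs' : v ∉ s' := Finset.notMem_erase v s
      have hs'sub : s' ⊂ s := Finset.erase_ssubset hv
      have hs'card : s'.card = s.card - 1 := Finset.card_erase_of_mem hv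
      obtain ⟨P, Q, c, hPne, hQne, hPQ, hPQunion, hcross⟩ := IH s' hs'sub (by omega)
      have hPs' : P ⊆ s' := hPQunion ▸ Finset.subset_union_left
      have hQs' : Q ⊆ s' := hPQunion ▸ Finset.subset_union_right
      have hmem_ne : ∀ u ∈ s', v ≠ u := fun u hu e => hvs' (e ▸ hu)
      by_cases h1 : ∀ q ∈ Q, μ v q = c
      · refine ⟨insert v P, Q, c, ⟨v, Finset.mem_insert_self v P⟩, hQne, ?_, ?_, ?_⟩
        · rw [Finset.disjoint_left]
          intro a ha haQ
          rcases Finset.mem_insert.mp ha with rfl | haP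
          · exact hvs' (hQs' haQ)
          · exact Finset.disjoint_left.1 hPQ haP haQ
        · rw [Finset.insert_union, hPQunion, hs', Finset.insert_erase hv]
        · intro i hi j hj
          rcases Finset.mem_insert.mp hi with hiv | hiP
          · subst hiv; exact h1 j hj
          · exact hcross i hiP j hj
      · by_cases h2 : ∀ p ∈ P, μ v p = c
        · refine ⟨P, insert v Q, c, hPne, ⟨v, Finset.mem_insert_self v Q⟩, ?_, ?_, ?_⟩
          · rw [Finset.disjoint_right]
            intro a ha haP
            rcases Finset.mem_insert.mp ha with rfl | haQ
            · exact hvs' (hPs' haP)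
            · exact Finset.disjoint_left.1 hPQ haP haQ
          · rw [Finset.union_insert, hPQunion, hs', Finset.insert_erase hv]
          · intro i hi j hj
            rcases Finset.mem_insert.mp hj with hjv | hjQ
            · subst hjv; exact (hsym i j).trans (h2 i hi)
            · exact hcross i hi j hjQ
        · push_neg at h1 h2
          obtain ⟨q, hqQ, hq⟩ := h1
          obtain ⟨p, hpP, hp⟩ := h2
          have hpq : p ≠ q := fun e => Finset.disjoint_left.1 hPQ hpP (e ▸ hqQ)
          have hvp : v ≠ p := hmem_ne p (hPs' hpP)
          have hvq : v ≠ q := hmem_ne q (hQs' hqQ)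
          have hcpq : μ p q = c := hcross p hpP q hqQ
          set d := μ v p with hd
          have hdc : d ≠ c := fun e => hp e
          have hvqd : μ v q = d := by
            rcases hA v p q hvp hvq hpq with h | h | h
            · exact h.symm
            · exact absurd (h.trans hcpq) hp
            · exact absurd (h.trans hcpq) hq
          -- every non-c edge from v has color d
          have alld : ∀ u ∈ s', μ v u ≠ c → μ v u = d := by
            intro u hu hunec
            rcases Finset.mem_union.mp (hPQunion ▸ hu) with huP | huQ
            · by_cases hup : u = q
              · exact hup ▸ hvqd
              rcases hA v u q (hmem_ne u hu) hvq
                  (fun e => Finset.disjoint_left.1 hPQ huP (e ▸ hqQ)) with h | h | h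
              · exact h.trans hvqd
              · exact absurd (h.trans (hcross u huP q hqQ)) hunec
              · exact absurd (hvqd.symm.trans (h.trans (hcross u huP q hqQ))) hdc
            · by_cases hup : u = p
              · exact hup ▸ rfl
              rcases hA v u p (hmem_ne u hu) hvp
                  (fun e => Finset.disjoint_left.1 hPQ (e ▸ hpP) huQ) with h | h | h
              · exact h
              · exact absurd (h.trans ((hsym u p).trans (hcross p hpP u huQ))) hunec
              · exact absurd (h.trans ((hsym u p).trans (hcross p hpP u huQ))).symm
                  (fun e => hdc e.symm)
          -- the mono-triangle forcing argument
          have key : ∀ u w t0, u ≠ w → u ≠ t0 → w ≠ t0 → v ≠ u → v ≠ w → v ≠ t0 →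
              μ v u = d → μ v w = c → μ v t0 = d → μ u t0 = c → μ w t0 = c →
              μ u w = c := by
            intro u w t0 huw hut hwt hvu hvw hvt e1 e2 e3 e4 e5
            rcases hA v u w hvu hvw huw with h | h | h
            · exact absurd (e1.symm.trans (h.trans e2)) hdc
            · exfalso
              have huwd : μ u w = d := h.symm.trans e1
              have hcount : ∃ c₁ c₂ : C, c₁ ≠ c₂ ∧
                  [μ v u, μ v w, μ v t0, μ u w, μ u t0, μ w t0].count c₁ = 3 ∧
                  [μ v u, μ v w, μ v t0, μ u w, μ u t0, μ w t0].count c₂ = 3 := by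
                refine ⟨d, c, hdc, ?_, ?_⟩ <;>
                  simp [e1, e2, e3, e4, e5, huwd, List.count_cons, hdc, Ne.symm hdc]
              rcases hB v u w t0 hvu hvw hvt huw hut hwt hcount with
                ⟨h1', h2'⟩ | ⟨h1', h2'⟩ | ⟨h1', h2'⟩ | ⟨h1', h2'⟩
              · exact hdc (e1.symm.trans (h1'.trans e2))
              · exact hdc ((e3.symm.trans h2').trans e4)
              · exact hdc ((e2.symm.trans h1').trans e3).symm
              · exact hdc ((huwd.symm.trans h1').trans e4)
            · exact h.symm.trans e2
          set D := s'.filter (fun u => μ v u ≠ c) with hD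
          set Cs := s'.filter (fun u => μ v u = c) with hCs
          have hpD : p ∈ D := by simp [hD, hPs' hpP]; exact hp
          have hqD : q ∈ D := by simp [hD, hQs' hqQ, hvqd, hdc]
          by_cases hCne : Cs.Nonempty
          · -- split (insert v D, Cs) with color c
            refine ⟨insert v D, Cs, c, ⟨v, Finset.mem_insert_self v D⟩, hCne, ?_, ?_, ?_⟩
            · rw [Finset.disjoint_left]
              intro a ha haC
              rcases Finset.mem_insert.mp ha with rfl | haD
              · exact hvs' (Finset.mem_of_mem_filter a haC)
              · simp only [hD, Finset.mem_filter] at haD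
                simp only [hCs, Finset.mem_filter] at haC
                exact haD.2 haC.2
            · have hDC : D ∪ Cs = s' := by
                ext u
                simp only [hD, hCs, Finset.mem_union, Finset.mem_filter]
                by_cases hu : μ v u = c <;> tauto
              rw [Finset.insert_union, hDC, hs', Finset.insert_erase hv]
            · intro i hi j hj
              simp only [hCs, Finset.mem_filter] at hj
              rcases Finset.mem_insert.mp hi with hiv | hiD
              · subst hiv; exact hj.2
              · -- i ∈ D, j ∈ Cs : μ i j = c
                simp only [hD, Finset.mem_filter] at hiD
                have hid : μ v i = d := alld i hiD.1 hiD.2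
                have hij : i ≠ j := fun e => hiD.2 (e ▸ hj.2)
                have hvi : v ≠ i := hmem_ne i hiD.1
                have hvj : v ≠ j := hmem_ne j hj.1
                rcases Finset.mem_union.mp (hPQunion ▸ hiD.1) with hiP | hiQ <;>
                  rcases Finset.mem_union.mp (hPQunion ▸ hj.1) with hjP | hjQ
                · -- both in P, use q
                  have hiq : i ≠ q := fun e => Finset.disjoint_left.1 hPQ hiP (e ▸ hqQ)
                  have hjq : j ≠ q := fun e => Finset.disjoint_left.1 hPQ hjP (e ▸ hqQ)
                  exact key i j q hij hiq hjq hvi hvj hvq hid hj.2 hvqd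
                    (hcross i hiP q hqQ) (hcross j hjP q hqQ)
                · exact hcross i hiP j hjQ
                · exact (hsym i j).trans (hcross j hjP i hiQ)
                · -- both in Q, use p
                  have hip : i ≠ p := fun e => Finset.disjoint_left.1 hPQ hpP (e ▸ hiQ)
                  have hjp : j ≠ p := fun e => Finset.disjoint_left.1 hPQ hpP (e ▸ hjQ)
                  exact key i j p hij hip hjp hvi hvj hvp hid hj.2 hd.symm
                    ((hsym i p).trans (hcross p hpP i hiQ))
                    ((hsym j p).trans (hcross p hpP j hjQ))
          · -- Cs empty: all v-edges are d; split ({v}, s') with color d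
            refine ⟨{v}, s', d, ⟨v, Finset.mem_singleton_self v⟩,
              Finset.card_pos.mp (show 0 < s'.card by omega), ?_, ?_, ?_⟩
            · simp [Finset.disjoint_singleton_left, hvs']
            · rw [show ({v} : Finset (Fin n)) ∪ s' = insert v s' from by
                ext u; simp [Finset.mem_insert]]
              rw [hs', Finset.insert_erase hv]
            · intro i hi j hj
              rw [Finset.mem_singleton.mp hi]
              apply alld j hj
              intro he
              exact hCne ⟨j, by simp [hCs, hj, he]⟩
    · -- base case : |s| = 2
      have hcard2 : s.card = 2 := by omega
      obtain ⟨i, j, hij, rfl⟩ := Finset.card_eq_two.mp hcard2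
      refine ⟨{i}, {j}, μ i j, ⟨i, Finset.mem_singleton_self i⟩,
        ⟨j, Finset.mem_singleton_self j⟩, by simp [hij, Ne.symm hij], rfl, ?_⟩
      intro a ha b hb
      rw [Finset.mem_singleton.mp ha, Finset.mem_singleton.mp hb]


lemma sortPerm {k : ℕ} (A : Finset (Fin k)) :
    ∃ σ : Equiv.Perm (Fin k),
      (∀ p : Fin k, (p : ℕ) < A.card → σ p ∈ A) ∧
      (∀ p : Fin k, A.card ≤ (p : ℕ) → σ p ∉ A) := by
  have hcard : A.card + Aᶜ.card = k := by
    rw [Finset.card_add_card_compl, Fintype.card_fin]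
  set e1 := A.orderIsoOfFin rfl with he1
  set e2 := Aᶜ.orderIsoOfFin rfl with he2
  set F : Fin k → Fin k := fun p =>
    if h : (p : ℕ) < A.card then (e1 ⟨p, h⟩ : Fin k)
    else (e2 ⟨(p : ℕ) - A.card, by omega⟩ : Fin k) with hF
  have hinj : Function.Injective F := by
    intro p p' hpp'
    simp only [hF] at hpp'
    by_cases h : (p : ℕ) < A.card <;> by_cases h' : (p' : ℕ) < A.card
    · rw [dif_pos h, dif_pos h'] at hpp'
      have := e1.injective (Subtype.ext hpp')
      have := Fin.mk.injEq _ _ _ _ ▸ this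
      exact Fin.ext (by simpa using this)
    · rw [dif_pos h, dif_neg h'] at hpp'
      have m1 : (e1 ⟨p, h⟩ : Fin k) ∈ A := (e1 ⟨p, h⟩).2
      have m2 : (e2 ⟨(p' : ℕ) - A.card, by omega⟩ : Fin k) ∈ Aᶜ :=
        (e2 ⟨(p' : ℕ) - A.card, by omega⟩).2
      rw [hpp'] at m1
      exact absurd m1 (Finset.mem_compl.mp m2)
    · rw [dif_neg h, dif_pos h'] at hpp'
      have m1 : (e1 ⟨p', h'⟩ : Fin k) ∈ A := (e1 ⟨p', h'⟩).2
      have m2 : (e2 ⟨(p : ℕ) - A.card, by omega⟩ : Fin k) ∈ Aᶜ :=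
        (e2 ⟨(p : ℕ) - A.card, by omega⟩).2
      rw [← hpp'] at m1
      exact absurd m1 (Finset.mem_compl.mp m2)
    · rw [dif_neg h, dif_neg h'] at hpp'
      have := e2.injective (Subtype.ext hpp')
      have := Fin.mk.injEq _ _ _ _ ▸ this
      have : (p : ℕ) - A.card = (p' : ℕ) - A.card := by simpa using this
      exact Fin.ext (by omega)
  refine ⟨Equiv.ofBijective F (Finite.injective_iff_bijective.mp hinj), ?_, ?_⟩
  · intro p hp
    show F p ∈ A
    simp only [hF, dif_pos hp]
    exact (e1 ⟨p, hp⟩).2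
  · intro p hp
    show F p ∉ A
    simp only [hF, dif_neg (not_lt.mpr hp)]
    exact Finset.mem_compl.mp (e2 ⟨(p : ℕ) - A.card, by omega⟩).2

lemma perm_comp {k : ℕ} {S : Type*} (g : (Fin k → S) → S) (π : S → S)
    (hπ : Function.Bijective π) (hg : PermutablyReducible g) :
    PermutablyReducible (fun y => π (g y)) := by
  obtain ⟨m, hm, hm', σ, g', h', q1, q2, he⟩ := hg
  refine ⟨m, hm, hm', σ, g', fun z => π (h' z), q1, ?_, fun x => by simp only []; rw [he x]⟩
  intro i x
  exact hπ.comp (q2 i x)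

lemma extend_update {n k : ℕ} (ι : Fin k → Fin n) (hι : Function.Injective ι)
    (u : Fin k → Fin 4) (c : Fin n → Fin 4) (i : Fin k) (a : Fin 4) :
    Function.extend ι (Function.update u i a) c
      = Function.update (Function.extend ι u c) (ι i) a := by
  funext j
  by_cases hj : j = ι i
  · subst hj
    rw [Function.update_self, hι.extend_apply, Function.update_self]
  · rw [Function.update_of_ne hj]
    by_cases hj2 : ∃ p, ι p = j
    · obtain ⟨p, rfl⟩ := hj2
      rw [hι.extend_apply, hι.extend_apply,
        Function.update_of_ne (fun e => hj (by rw [e]))]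
    · rw [Function.extend_apply' _ _ _ hj2, Function.extend_apply' _ _ _ hj2]


inductive Tr (n : ℕ) : Type where
  | leaf : Fin n → Tr n
  | node : (Fin 4 → Fin 4 → Fin 4) → Tr n → Tr n → Tr n

namespace Tr
variable {n : ℕ}

def eval : Tr n → (Fin n → Fin 4) → Fin 4
  | leaf i, x => x i
  | node op l r, x => op (l.eval x) (r.eval x)

def leaves : Tr n → Finset (Fin n)
  | leaf i => {i}
  | node _ l r => l.leaves ∪ r.leaves

def Good (μ : Fin n → Fin n → (Fin 4 → Fin 4 → Fin 4)) : Tr n → Prop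
  | leaf _ => True
  | node op l r => IsBinaryQG op ∧ (∀ x, op x 0 = x) ∧ (∀ x, op 0 x = x) ∧
      (∀ a b, op a b = op b a) ∧
      Disjoint l.leaves r.leaves ∧
      (∀ i ∈ l.leaves, ∀ j ∈ r.leaves, μ i j = op) ∧
      l.Good μ ∧ r.Good μ

variable {μ : Fin n → Fin n → (Fin 4 → Fin 4 → Fin 4)}

lemma eval_congr : ∀ (t : Tr n) (x y : Fin n → Fin 4),
    (∀ i ∈ t.leaves, x i = y i) → t.eval x = t.eval y
  | leaf i, x, y, h => h i (by simp [leaves])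
  | node op l r, x, y, h => by
      simp only [eval]
      rw [eval_congr l x y (fun i hi => h i (by simp [leaves, hi])),
          eval_congr r x y (fun i hi => h i (by simp [leaves, hi]))]

lemma eval_zero : ∀ (t : Tr n), t.Good μ → ∀ (x : Fin n → Fin 4),
    (∀ i ∈ t.leaves, x i = 0) → t.eval x = 0
  | leaf i, _, x, h => h i (by simp [leaves])
  | node op l r, hg, x, h => by
      obtain ⟨_, h1, _, _, _, _, gl, gr⟩ := hg
      simp only [eval]
      rw [eval_zero l gl x (fun i hi => h i (by simp [leaves, hi])),
          eval_zero r gr x (fun i hi => h i (by simp [leaves, hi])), h1]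

lemma eval_one : ∀ (t : Tr n), t.Good μ → ∀ (x : Fin n → Fin 4) (i : Fin n) (a : Fin 4),
    i ∈ t.leaves → x i = a → (∀ j ∈ t.leaves, j ≠ i → x j = 0) → t.eval x = a
  | leaf i0, _, x, i, a, hi, hxa, _ => by
      simp [leaves] at hi; subst hi; simpa [eval] using hxa
  | node op l r, hg, x, i, a, hi, hxa, h0 => by
      obtain ⟨_, h1, h2, _, hdisj, _, gl, gr⟩ := hg
      simp only [eval]
      simp only [leaves, Finset.mem_union] at hi
      rcases hi with hi | hi
      · rw [eval_one l gl x i a hi hxa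
            (fun j hj hji => h0 j (by simp [leaves, hj]) hji),
          eval_zero r gr x (fun j hj => h0 j (by simp [leaves, hj])
            (fun e => (Finset.disjoint_left.1 hdisj hi (e ▸ hj)).elim 
              )), h1]
      · rw [eval_zero l gl x (fun j hj => h0 j (by simp [leaves, hj])
            (fun e => (Finset.disjoint_left.1 hdisj (e ▸ hj) hi).elim)),
          eval_one r gr x i a hi hxa
            (fun j hj hji => h0 j (by simp [leaves, hj]) hji), h2]

lemma eval_two (hsym : ∀ i j, μ i j = μ j i) :
    ∀ (t : Tr n), t.Good μ → ∀ (x : Fin n → Fin 4) (i j : Fin n) (a b : Fin 4),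
    i ∈ t.leaves → j ∈ t.leaves → i ≠ j → x i = a → x j = b →
    (∀ u ∈ t.leaves, u ≠ i → u ≠ j → x u = 0) → t.eval x = μ i j a b
  | leaf i0, _, x, i, j, a, b, hi, hj, hij, _, _, _ => by
      simp [leaves] at hi hj; exact absurd (hi.trans hj.symm) hij
  | node op l r, hg, x, i, j, a, b, hi, hj, hij, hxa, hxb, h0 => by
      obtain ⟨_, h1, h2, hcomm, hdisj, hμ, gl, gr⟩ := hg
      simp only [eval]
      simp only [leaves, Finset.mem_union] at hi hj
      have hzl : (∀ u, u ∈ l.leaves → u ≠ i → u ≠ j → x u = 0) :=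
        fun u hu => h0 u (by simp [leaves, hu])
      have hzr : (∀ u, u ∈ r.leaves → u ≠ i → u ≠ j → x u = 0) :=
        fun u hu => h0 u (by simp [leaves, hu])
      have hd : ∀ u, u ∈ l.leaves → u ∈ r.leaves → False :=
        fun u h h' => Finset.disjoint_left.1 hdisj h h'
      rcases hi with hi | hi <;> rcases hj with hj | hj
      · -- both in l
        rw [eval_two hsym l gl x i j a b hi hj hij hxa hxb hzl,
            eval_zero r gr x (fun u hu => hzr u hu
              (fun e => hd u (e ▸ hi) hu) (fun e => hd u (e ▸ hj) hu)), h1]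
      · -- i in l, j in r
        rw [eval_one l gl x i a hi hxa (fun u hu hui => hzl u hu hui
              (fun e => hd j (e ▸ hu) hj)),
            eval_one r gr x j b hj hxb (fun u hu huj => hzr u hu
              (fun e => hd i hi (e ▸ hu)) huj), hμ i hi j hj]
      · -- i in r, j in l
        rw [eval_one l gl x j b hj hxb (fun u hu huj => hzl u hu
              (fun e => hd i (e ▸ hu) hi) huj),
            eval_one r gr x i a hi hxa (fun u hu hui => hzr u hu hui
              (fun e => hd j hj (e ▸ hu))), hcomm b a, ← hμ j hj i hi, hsym j i]
      · -- both in r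
        rw [eval_zero l gl x (fun u hu => hzl u hu
              (fun e => hd u hu (e ▸ hi)) (fun e => hd u hu (e ▸ hj))),
            eval_two hsym r gr x i j a b hi hj hij hxa hxb hzr, h2]

lemma eval_bij : ∀ (t : Tr n), t.Good μ → ∀ (x : Fin n → Fin 4) (i : Fin n),
    i ∈ t.leaves → Function.Bijective (fun a => t.eval (Function.update x i a))
  | leaf i0, _, x, i, hi => by
      simp [leaves] at hi; subst hi
      simpa [eval] using Function.bijective_id
  | node op l r, hg, x, i, hi => by
      obtain ⟨hqg, _, _, _, hdisj, _, gl, gr⟩ := hg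
      simp only [leaves, Finset.mem_union] at hi
      simp only [eval]
      rcases hi with hi | hi
      · have hconst : ∀ a, r.eval (Function.update x i a) = r.eval x := fun a =>
          eval_congr r _ _ (fun u hu => Function.update_of_ne
            (fun e : u = i => Finset.disjoint_left.1 hdisj hi (e ▸ hu)) _ _)
        have : (fun a => op (l.eval (Function.update x i a)) (r.eval (Function.update x i a)))
            = (fun u => op u (r.eval x)) ∘ (fun a => l.eval (Function.update x i a)) := by
          funext a; simp [hconst a]
        rw [this]
        exact (hqg.2 _).comp (eval_bij l gl x i hi)
      · have hconst : ∀ a, l.eval (Function.update x i a) = l.eval x := fun a =>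
          eval_congr l _ _ (fun u hu => Function.update_of_ne
            (fun e : u = i => Finset.disjoint_left.1 hdisj (e ▸ hu) hi) _ _)
        have : (fun a => op (l.eval (Function.update x i a)) (r.eval (Function.update x i a)))
            = (fun u => op (l.eval x) u) ∘ (fun a => r.eval (Function.update x i a)) := by
          funext a; simp [hconst a]
        rw [this]
        exact (hqg.1 _).comp (eval_bij r gr x i hi)


lemma retract_quasi {k : ℕ} (t : Tr n) (hg : t.Good μ) (ι : Fin k → Fin n)
    (hι : Function.Injective ι) (hmem : ∀ p, ι p ∈ t.leaves) (c : Fin n → Fin 4) :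
    IsNQuasigroup (fun u => t.eval (Function.extend ι u c)) := by
  intro i x
  have : (fun a => t.eval (Function.extend ι (Function.update x i a) c))
      = fun a => t.eval (Function.update (Function.extend ι x c) (ι i) a) := by
    funext a; rw [extend_update ι hι]
  rw [this]
  exact eval_bij t hg _ (ι i) (hmem i)

lemma good_swap (hsym : ∀ i j, μ i j = μ j i) {op : Fin 4 → Fin 4 → Fin 4} {l r : Tr n}
    (hg : (node op l r).Good μ) : (node op r l).Good μ := by
  obtain ⟨hqg, h1, h2, hcomm, hdisj, hμ, gl, gr⟩ := hg
  exact ⟨hqg, h1, h2, hcomm, hdisj.symm,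
    fun i hi j hj => (hsym i j).trans (hμ j hj i hi), gr, gl⟩

/-- The key node case: the first subtree contains between 2 and k-1 free positions. -/
lemma node_red {k : ℕ} (op : Fin 4 → Fin 4 → Fin 4) (l r : Tr n)
    (hg : (node op l r).Good μ) (ι : Fin k → Fin n) (hι : Function.Injective ι)
    (hmem : ∀ p, ι p ∈ (node op l r).leaves) (c : Fin n → Fin 4)
    (h2 : 2 ≤ (Finset.univ.filter (fun p => ι p ∈ l.leaves)).card)
    (h1 : (Finset.univ.filter (fun p => ι p ∈ l.leaves)).card ≤ k - 1) :
    PermutablyReducible (fun y : Fin k → Fin 4 => (node op l r).eval (Function.extend ι y c)) := by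
  obtain ⟨hqg, hu1, hu2, hcomm, hdisj, hμ, gl, gr⟩ := hg
  set A : Finset (Fin k) := Finset.univ.filter (fun p => ι p ∈ l.leaves) with hA
  set m : ℕ := A.card with hm
  have hkk : m ≤ k := by
    have := Finset.card_le_univ A
    simpa using this
  have hmk : m ≤ k - 1 := h1
  have hm2 : 2 ≤ m := h2
  obtain ⟨σ, hσ1, hσ2⟩ := sortPerm A
  -- index maps
  set ι1 : Fin m → Fin n := fun q => ι (σ ⟨q.1, by omega⟩) with hι1
  set ι2 : Fin (k - m) → Fin n := fun q => ι (σ ⟨m + q.1, by have := q.isLt; omega⟩) with hι2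
  have hι1inj : Function.Injective ι1 := by
    intro a b hab
    have := hι hab
    have := σ.injective this
    exact Fin.ext (by simpa [Fin.ext_iff] using this)
  have hι2inj : Function.Injective ι2 := by
    intro a b hab
    have := hι hab
    have := σ.injective this
    have : m + a.1 = m + b.1 := by simpa [Fin.ext_iff] using this
    exact Fin.ext (by omega)
  have hι1mem : ∀ q, ι1 q ∈ l.leaves := by
    intro q
    have : σ ⟨q.1, by omega⟩ ∈ A := hσ1 _ (by exact q.isLt)
    simpa [hA] using this
  have hι2mem : ∀ q, ι2 q ∈ r.leaves := by
    intro q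
    have hnot : σ ⟨m + q.1, by have := q.isLt; omega⟩ ∉ A := hσ2 _ (by show A.card ≤ m + q.1; omega)
    have : ι2 q ∉ l.leaves := by simpa [hA] using hnot
    have := hmem (σ ⟨m + q.1, by have := q.isLt; omega⟩)
    simp only [leaves, Finset.mem_union] at this
    rcases this with h | h
    · exact absurd h ‹ι2 q ∉ l.leaves›
    · exact h
  set G1 : (Fin m → Fin 4) → Fin 4 := fun u => l.eval (Function.extend ι1 u c) with hG1
  set G2 : (Fin (k - m) → Fin 4) → Fin 4 := fun v => r.eval (Function.extend ι2 v c) with hG2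
  set H : (Fin (k - m + 1) → Fin 4) → Fin 4 :=
    fun w => op (w 0) (G2 (fun q => w q.succ)) with hH
  have qg1 : IsNQuasigroup G1 := retract_quasi l gl ι1 hι1inj hι1mem c
  have qg2 : IsNQuasigroup G2 := retract_quasi r gr ι2 hι2inj hι2mem c
  have qH : IsNQuasigroup H := by
    intro i w
    induction i using Fin.cases with
    | zero =>
        have : (fun a => H (Function.update w 0 a))
            = fun a => op a (G2 fun q => w q.succ) := by
          funext a
          have harg : (fun q : Fin (k-m) => Function.update w 0 a q.succ)
              = fun q => w q.succ := by
            funext q; exact Function.update_of_ne (Fin.succ_ne_zero q) _ _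
          simp only [hH, Function.update_self, harg]
        rw [this]
        exact hqg.2 _
    | succ j =>
        have : (fun a => H (Function.update w j.succ a))
            = (fun u => op (w 0) u) ∘
              (fun a => G2 (Function.update (fun q => w q.succ) j a)) := by
          funext a
          have harg : (fun q : Fin (k-m) => Function.update w j.succ a q.succ)
              = Function.update (fun q => w q.succ) j a := by
            funext q
            by_cases hq : q = j
            · subst hq; rw [Function.update_self, Function.update_self]
            · rw [Function.update_of_ne (fun e => hq (Fin.succ_injective _ e)),
                Function.update_of_ne hq]
          simp only [hH, Function.comp, harg,
            Function.update_of_ne (Fin.succ_ne_zero j).symm]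
        rw [this]
        exact (hqg.1 _).comp (qg2 j _)
  refine ⟨m, hm2, hmk, σ, G1, H, qg1, qH, ?_⟩
  intro y
  show op (l.eval (Function.extend ι y c)) (r.eval (Function.extend ι y c)) = _
  have e0 : (Fin.cons (G1 fun q : Fin m => y (σ ⟨q.val, by have := q.isLt; omega⟩))
      (fun j : Fin (k - m) => y (σ ⟨m + j.val, by have := j.isLt; omega⟩)) : Fin (k-m+1) → Fin 4) 0
      = G1 fun q : Fin m => y (σ ⟨q.val, by have := q.isLt; omega⟩) := Fin.cons_zero _ _
  have hcons := Fin.cons_succ (α := fun _ => Fin 4)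
    (G1 fun q : Fin m => y (σ ⟨q.val, by have := q.isLt; omega⟩))
    (fun j : Fin (k - m) => y (σ ⟨m + j.val, by have := j.isLt; omega⟩))
  simp only [hH, e0]
  congr 1
  · -- left equality
    rw [show (G1 fun q : Fin m => y (σ ⟨q.val, by have := q.isLt; omega⟩))
        = l.eval (Function.extend ι1 (fun q : Fin m => y (σ ⟨q.val, by have := q.isLt; omega⟩)) c) from rfl]
    apply eval_congr
    intro j hj
    by_cases hex : ∃ p, ι p = j
    · obtain ⟨p, rfl⟩ := hex
      have hpA : p ∈ A := by simp [hA, hj]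
      have hlt : ((σ.symm p : Fin k) : ℕ) < m := by
        by_contra hge
        exact hσ2 (σ.symm p) (by omega) (by simpa using hpA)
      have hval : ι1 ⟨(σ.symm p : Fin k), hlt⟩ = ι p := by
        simp only [hι1]
        congr 1
        have : (⟨((σ.symm p : Fin k) : ℕ), by omega⟩ : Fin k) = σ.symm p := Fin.ext rfl
        rw [this, Equiv.apply_symm_apply]
      rw [hι.extend_apply, ← hval, hι1inj.extend_apply]
      have : (⟨((σ.symm p : Fin k) : ℕ), by omega⟩ : Fin k) = σ.symm p := Fin.ext rfl
      rw [this, Equiv.apply_symm_apply]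
    · have hex1 : ¬∃ q, ι1 q = j := by
        rintro ⟨q, rfl⟩
        exact hex ⟨_, rfl⟩
      rw [Function.extend_apply' _ _ _ hex, Function.extend_apply' _ _ _ hex1]
  · -- right equality
    have : (fun q : Fin (k-m) => (Fin.cons (G1 fun q : Fin m => y (σ ⟨q.val, by have := q.isLt; omega⟩))
        (fun j : Fin (k - m) => y (σ ⟨m + j.val, by have := j.isLt; omega⟩)) : Fin (k-m+1) → Fin 4) q.succ)
        = fun j : Fin (k - m) => y (σ ⟨m + j.val, by have := j.isLt; omega⟩) := by
      funext q; exact Fin.cons_succ _ _ q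
    rw [this]
    apply eval_congr
    intro j hj
    by_cases hex : ∃ p, ι p = j
    · obtain ⟨p, rfl⟩ := hex
      have hpA : p ∉ A := by
        simp only [hA, Finset.mem_filter]
        rintro ⟨-, hmem'⟩
        exact Finset.disjoint_left.1 hdisj hmem' hj
      have hge : m ≤ ((σ.symm p : Fin k) : ℕ) := by
        by_contra hlt
        push_neg at hlt
        have := hσ1 (σ.symm p) hlt
        rw [Equiv.apply_symm_apply] at this
        exact hpA this
      have hlt2 : ((σ.symm p : Fin k) : ℕ) - m < k - m := by
        have := (σ.symm p).isLt; omega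
      have hval : ι2 ⟨((σ.symm p : Fin k) : ℕ) - m, hlt2⟩ = ι p := by
        simp only [hι2]
        congr 1
        have : (⟨m + (((σ.symm p : Fin k) : ℕ) - m), by have := (σ.symm p).isLt; omega⟩ : Fin k)
            = σ.symm p := by
          apply Fin.ext
          show m + (((σ.symm p : Fin k) : ℕ) - m) = _
          omega
        rw [this, Equiv.apply_symm_apply]
      rw [hι.extend_apply, ← hval, hι2inj.extend_apply]
      simp only [hι2]
      congr 2
      have : (⟨m + (((σ.symm p : Fin k) : ℕ) - m), by have := (σ.symm p).isLt; omega⟩ : Fin k)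
          = σ.symm p := by
        apply Fin.ext
        show m + (((σ.symm p : Fin k) : ℕ) - m) = _
        omega
      rw [this, Equiv.apply_symm_apply]
    · have hex2 : ¬∃ q, ι2 q = j := by
        rintro ⟨q, rfl⟩
        exact hex ⟨_, rfl⟩
      rw [Function.extend_apply' _ _ _ hex, Function.extend_apply' _ _ _ hex2]


lemma main_red (hsym : ∀ i j, μ i j = μ j i) (t : Tr n) (hg : t.Good μ) :
    ∀ (k : ℕ), 3 ≤ k → ∀ (ι : Fin k → Fin n),
      Function.Injective ι → (∀ p, ι p ∈ t.leaves) → ∀ c : Fin n → Fin 4,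
      PermutablyReducible (fun y : Fin k → Fin 4 => t.eval (Function.extend ι y c)) := by
  induction t with
  | leaf i =>
      intro k hk ι hι hmem c
      exfalso
      have h0 := hmem ⟨0, by omega⟩
      have h1 := hmem ⟨1, by omega⟩
      simp only [leaves, Finset.mem_singleton] at h0 h1
      have := hι (h0.trans h1.symm)
      simp [Fin.ext_iff] at this
  | node op l r ihl ihr =>
      intro k hk ι hι hmem c
      obtain ⟨hqg, hu1, hu2, hcomm, hdisj, hμ, gl, gr⟩ := hg
      by_cases hall : ∀ p, ι p ∈ l.leaves
      · have hfun : (fun y : Fin k → Fin 4 => (node op l r).eval (Function.extend ι y c))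
            = fun y => (fun u => op u (r.eval c)) (l.eval (Function.extend ι y c)) := by
          funext y
          show op _ _ = op _ _
          congr 1
          apply eval_congr
          intro j hj
          apply Function.extend_apply'
          rintro ⟨p, rfl⟩
          exact Finset.disjoint_left.1 hdisj (hall p) hj
        rw [hfun]
        exact perm_comp _ _ (hqg.2 _) (ihl gl k hk ι hι hall c)
      · by_cases hallr : ∀ p, ι p ∈ r.leaves
        · have hfun : (fun y : Fin k → Fin 4 => (node op l r).eval (Function.extend ι y c))
              = fun y => (fun u => op (l.eval c) u) (r.eval (Function.extend ι y c)) := by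
            funext y
            show op _ _ = op _ _
            congr 1
            apply eval_congr
            intro j hj
            apply Function.extend_apply'
            rintro ⟨p, rfl⟩
            exact Finset.disjoint_left.1 hdisj hj (hallr p)
          rw [hfun]
          exact perm_comp _ _ (hqg.1 _) (ihr gr k hk ι hι hallr c)
        · set A : Finset (Fin k) := Finset.univ.filter (fun p => ι p ∈ l.leaves) with hA
          have hmemlr : ∀ p, ι p ∈ l.leaves ∨ ι p ∈ r.leaves := by
            intro p
            have := hmem p
            simpa [leaves, Finset.mem_union] using this
          have hcompl : Finset.univ.filter (fun p => ι p ∈ r.leaves) = Aᶜ := by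
            ext p
            simp only [Finset.mem_filter, Finset.mem_univ, true_and, Finset.mem_compl, hA]
            constructor
            · intro hr hl
              exact Finset.disjoint_left.1 hdisj hl hr
            · intro hl
              rcases hmemlr p with h | h
              · exact absurd h hl
              · exact h
          have hAub : A.card ≤ k := by
            have := Finset.card_le_univ A
            simpa using this
          have hAne : A.card ≠ k := by
            intro he
            apply hallr
            intro p
            have hAuniv : A = Finset.univ := Finset.eq_univ_of_card A (by simp [he])
            exfalso
            apply hall
            intro p'
            have : p' ∈ A := hAuniv ▸ Finset.mem_univ p'
            simpa [hA] using this
          have hApos : 0 < A.card := by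
            rcases not_forall.mp hallr with ⟨p, hp⟩
            have : ι p ∈ l.leaves := (hmemlr p).resolve_right hp
            exact Finset.card_pos.mpr ⟨p, by simp [hA, this]⟩
          have hgood : (node op l r).Good μ :=
            ⟨hqg, hu1, hu2, hcomm, hdisj, hμ, gl, gr⟩
          by_cases hm2 : 2 ≤ A.card
          · exact node_red op l r hgood ι hι hmem c (by rw [← hA]; exact hm2) (by rw [← hA]; omega)
          · -- A.card = 1, swap sides
            have hfun : (fun y : Fin k → Fin 4 => (node op l r).eval (Function.extend ι y c))
                = fun y => (node op r l).eval (Function.extend ι y c) := by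
              funext y
              show op _ _ = op _ _
              rw [hcomm]
            rw [hfun]
            have hcard' : (Finset.univ.filter (fun p => ι p ∈ r.leaves)).card = k - A.card := by
              rw [hcompl, Finset.card_compl]
              simp
            apply node_red op r l (good_swap hsym hgood) ι hι ?_ c ?_ ?_
            · intro p
              have := hmem p
              simp only [leaves, Finset.mem_union] at this ⊢
              tauto
            · rw [hcard']; omega
            · rw [hcard']; omega



end Tr


lemma exists_tree {n : ℕ} (μ : Fin n → Fin n → (Fin 4 → Fin 4 → Fin 4))
    (hsym : ∀ i j, μ i j = μ j i)
    (hcol : ∀ i j : Fin n, i ≠ j →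
      IsBinaryQG (μ i j) ∧ (∀ x, μ i j x 0 = x) ∧ (∀ x, μ i j 0 x = x))
    (hA : CondA μ) (hB : CondB μ) :
    ∀ s : Finset (Fin n), s.Nonempty → ∃ t : Tr n, t.leaves = s ∧ t.Good μ := by
  intro s
  induction s using Finset.strongInduction with
  | _ s IH =>
    intro hne
    by_cases h1 : s.card ≤ 1
    · have hcard : s.card = 1 := le_antisymm h1 (Finset.card_pos.mpr hne)
      obtain ⟨i, rfl⟩ := Finset.card_eq_one.mp hcard
      exact ⟨Tr.leaf i, rfl, trivial⟩
    · push_neg at h1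
      obtain ⟨P, Q, c, hPne, hQne, hPQ, hunion, hcross⟩ := split μ hsym hA hB s (by omega)
      have hPs : P ⊂ s := by
        rw [← hunion]
        refine (Finset.ssubset_iff_of_subset Finset.subset_union_left).mpr ?_
        obtain ⟨q, hq⟩ := hQne
        exact ⟨q, Finset.mem_union_right _ hq, fun hqP => Finset.disjoint_left.1 hPQ hqP hq⟩
      have hQs : Q ⊂ s := by
        rw [← hunion]
        refine (Finset.ssubset_iff_of_subset Finset.subset_union_right).mpr ?_
        obtain ⟨p, hp⟩ := hPne
        exact ⟨p, Finset.mem_union_left _ hp, fun hpQ => Finset.disjoint_left.1 hPQ hp hpQ⟩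
      obtain ⟨tP, hlP, hgP⟩ := IH P hPs hPne
      obtain ⟨tQ, hlQ, hgQ⟩ := IH Q hQs hQne
      obtain ⟨p0, hp0⟩ := hPne
      obtain ⟨q0, hq0⟩ := hQne
      have hp0q0 : p0 ≠ q0 := fun e => Finset.disjoint_left.1 hPQ hp0 (e ▸ hq0)
      have hc : c = μ p0 q0 := (hcross p0 hp0 q0 hq0).symm
      subst hc
      obtain ⟨hbq, hid1, hid2⟩ := hcol p0 q0 hp0q0
      refine ⟨Tr.node (μ p0 q0) tP tQ, ?_, ?_⟩
      · show tP.leaves ∪ tQ.leaves = s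
        rw [hlP, hlQ, hunion]
      · exact ⟨hbq, hid1, hid2, comm4 hbq hid1 hid2,
          by rw [hlP, hlQ]; exact hPQ,
          fun i hi j hj => hcross i (hlP ▸ hi) j (hlQ ▸ hj), hgP, hgQ⟩

/-- Proposition 3.5: if an edge coloring of `Kₙ` (`n ≥ 3`) by
normalized binary quasigroups of order 4 satisfies (A) and (B), then there is a
completely reducible normalized `n`-quasigroup `f` with `μ_f = μ`. -/
theorem stmt8 {n : ℕ} (hn : 3 ≤ n) (μ : Fin n → Fin n → (Fin 4 → Fin 4 → Fin 4))
    (hsym : ∀ i j, μ i j = μ j i)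
    (hcol : ∀ i j : Fin n, i ≠ j →
      IsBinaryQG (μ i j) ∧ (∀ x, μ i j x 0 = x) ∧ (∀ x, μ i j 0 x = x))
    (hA : CondA μ) (hB : CondB μ) :
    ∃ f : (Fin n → Fin 4) → Fin 4,
      IsNQuasigroup f ∧ Normalized f ∧ CompletelyReducible f ∧
      ∀ i j : Fin n, i ≠ j → colorOf f i j = μ i j := by
  obtain ⟨t, hleaves, hgood⟩ := exists_tree μ hsym hcol hA hB Finset.univ
    ⟨⟨0, by omega⟩, Finset.mem_univ _⟩
  have hmem : ∀ i : Fin n, i ∈ t.leaves := fun i => hleaves ▸ Finset.mem_univ i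
  refine ⟨t.eval, ?_, ?_, ⟨?_, ?_⟩, ?_⟩
  · -- IsNQuasigroup
    intro i x
    exact Tr.eval_bij t hgood x i (hmem i)
  · -- Normalized
    intro i a
    exact Tr.eval_one t hgood _ i a (hmem i) (if_pos rfl)
      (fun j _ hji => if_neg hji)
  · -- PermutablyReducible
    have hfun : t.eval = fun y : Fin n → Fin 4 =>
        t.eval (Function.extend id y (fun _ => (0 : Fin 4))) := by
      funext y
      congr 1
      funext j
      exact (Function.injective_id.extend_apply y _ j).symm
    rw [hfun]
    exact Tr.main_red hsym t hgood n hn id Function.injective_id (fun p => hmem p) _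
  · -- retracts
    intro k hk3 _ ι hinj c
    exact Tr.main_red hsym t hgood k hk3 ι hinj (fun p => hmem (ι p)) c
  · -- colors
    intro i j hij
    funext a b
    refine Tr.eval_two hsym t hgood _ i j a b (hmem i) (hmem j) hij ?_ ?_ ?_
    · simp
    · simp [hij.symm]
    · intro u _ hui huj
      simp [hui, huj]
end

section
/- Let n ≥ 3 and let f and g be n-quasigroups of order 4 all of whose principal 3-retracts are permutably reducible. If f(x̄) = g(x̄) for every tuple x̄ ∈ {0,1,2,3}ⁿ having at most two nonzero coordinates, then f = g. -/
set_option maxRecDepth 10000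

section Aux

/-- The 9 derangements of `Fin 4`. -/
def Dtab : Fin 9 → Fin 4 → Fin 4 :=
 ![![1,0,3,2], ![1,2,3,0], ![1,3,0,2], ![2,0,3,1], ![2,3,0,1], ![2,3,1,0],
   ![3,0,1,2], ![3,2,0,1], ![3,2,1,0]]

theorem derange_mem : ∀ f : Fin 4 → Fin 4, Function.Injective f → (∀ w, f w ≠ w) →
    ∃ i : Fin 9, f = Dtab i := by
  decide

theorem closAux : ∀ a b c : Fin 9,
    (∀ w, Dtab a w ≠ Dtab b w) → (∀ w, Dtab a w ≠ Dtab c w) → (∀ w, Dtab b w ≠ Dtab c w) →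
    ∀ i j : Fin 4, ∃ k : Fin 4,
      ∀ w, ![id, Dtab a, Dtab b, Dtab c] i (![id, Dtab a, Dtab b, Dtab c] j w)
            = ![id, Dtab a, Dtab b, Dtab c] k w := by
  decide

theorem grouplemma (s : Fin 4 → Fin 4 → Fin 4)
    (h1 : ∀ u, Function.Injective (s u))
    (h2 : ∀ w u v, s u w = s v w → u = v)
    (h0 : ∀ w, s 0 w = w) :
    ∀ u v, ∃ b, ∀ w, s u (s v w) = s b w := by
  have hder : ∀ u : Fin 4, u ≠ 0 → ∀ w, s u w ≠ w := by
    intro u hu w h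
    exact hu (h2 w u 0 (by rw [h, h0]))
  obtain ⟨p, hp⟩ := derange_mem (s 1) (h1 1) (hder 1 (by decide))
  obtain ⟨q, hq⟩ := derange_mem (s 2) (h1 2) (hder 2 (by decide))
  obtain ⟨r, hr⟩ := derange_mem (s 3) (h1 3) (hder 3 (by decide))
  have hT : ∀ t : Fin 4, s t = ![id, Dtab p, Dtab q, Dtab r] t := by
    intro t
    fin_cases t
    · exact funext h0
    · exact hp
    · exact hq
    · exact hr
  have hd : ∀ (u v : Fin 4), u ≠ v → ∀ w, s u w ≠ s v w := by
    intro u v huv w h; exact huv (h2 w u v h)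
  intro u v
  obtain ⟨k, hk⟩ := closAux p q r
    (fun w => by rw [← hp, ← hq]; exact hd 1 2 (by decide) w)
    (fun w => by rw [← hp, ← hr]; exact hd 1 3 (by decide) w)
    (fun w => by rw [← hq, ← hr]; exact hd 2 3 (by decide) w)
    u v
  exact ⟨k, fun w => by rw [hT u, hT v, hT k]; exact hk w⟩

end Aux

theorem keylemma (G H : Fin 4 → Fin 4 → Fin 4) (hG : IsBinaryQG G) (hH : IsBinaryQG H)
    (cond : ∀ z, ∃ a, (H (G a 0) 0 = H (G 0 0) z) ∧ ∀ y, H (G 0 y) z = H (G a y) 0) :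
    ∀ x z a, H (G a 0) 0 = H (G x 0) z → ∀ y, H (G x y) z = H (G a y) 0 := by
  intro x z a ha y
  obtain ⟨a', _, ha'⟩ := cond z
  let e : Fin 4 ≃ Fin 4 := Equiv.ofBijective (G 0) (hG.1 0)
  have he : ∀ w, G 0 w = e w := fun w => rfl
  set s : Fin 4 → Fin 4 → Fin 4 := fun u w => G u (e.symm w) with hs
  have h1 : ∀ u, Function.Injective (s u) :=
    fun u => ((hG.1 u).injective).comp e.symm.injective
  have h2 : ∀ w u v, s u w = s v w → u = v := fun w u v h => (hG.2 (e.symm w)).injective h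
  have h0 : ∀ w, s 0 w = w := fun w => by
    show G 0 (e.symm w) = w
    rw [he]; exact e.apply_symm_apply w
  have hstep : ∀ c, H c z = H (G a' (e.symm c)) 0 := by
    intro c
    have hc : G 0 (e.symm c) = c := by rw [he]; exact e.apply_symm_apply c
    nth_rewrite 1 [← hc]
    exact ha' (e.symm c)
  obtain ⟨b, hb⟩ := grouplemma s h1 h2 h0 a' x
  have hmain : ∀ y', H (G x y') z = H (G b y') 0 := by
    intro y'
    rw [hstep (G x y')]
    congr 1
    have h3 : G x y' = s x (e y') := by show _ = G x (e.symm (e y')); rw [e.symm_apply_apply]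
    rw [h3]
    have h4 : G a' (e.symm (s x (e y'))) = s a' (s x (e y')) := rfl
    rw [h4, hb (e y')]
    show G b (e.symm (e y')) = G b y'
    rw [e.symm_apply_apply]
  have hab : a = b := by
    have := (hmain 0).symm.trans ha.symm
    exact (hG.2 0).injective ((hH.2 0).injective this).symm
  rw [hab]; exact hmain y

theorem sameLemma (G H G' H' : Fin 4 → Fin 4 → Fin 4)
    (hG : IsBinaryQG G) (hH' : IsBinaryQG H')
    (hb : ∀ x y z : Fin 4, x = 0 ∨ y = 0 ∨ z = 0 → H (G x y) z = H' (G' x y) z) :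
    ∀ x y z, H (G x y) z = H' (G' x y) z := by
  intro x y z
  obtain ⟨a, ha0⟩ := (hG.2 0).surjective (G x y)
  have ha : G a 0 = G x y := ha0
  have h1 : H (G x y) z = H' (G' a 0) z := by
    rw [← ha]; exact hb a 0 z (Or.inr (Or.inl rfl))
  have h2 : G' x y = G' a 0 := by
    apply (hH'.2 0).injective
    show H' (G' x y) 0 = H' (G' a 0) 0
    rw [← hb x y 0 (Or.inr (Or.inr rfl)), ← hb a 0 0 (Or.inr (Or.inl rfl)), ha]
  rw [h1, h2]

theorem crossLemma (G H G' H' : Fin 4 → Fin 4 → Fin 4)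
    (hGq : IsBinaryQG G) (hHq : IsBinaryQG H) (hG'q : IsBinaryQG G')
    (hb : ∀ x y z : Fin 4, x = 0 ∨ y = 0 ∨ z = 0 → H (G x y) z = H' (G' x z) y) :
    ∀ x y z, H (G x y) z = H' (G' x z) y := by
  have cond : ∀ z, ∃ a, (H (G a 0) 0 = H (G 0 0) z) ∧ ∀ y, H (G 0 y) z = H (G a y) 0 := by
    intro z
    obtain ⟨a, ha0⟩ := (hG'q.2 0).surjective (G' 0 z)
    have ha : G' a 0 = G' 0 z := ha0
    have h1 : ∀ y, H (G 0 y) z = H (G a y) 0 := by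
      intro y
      rw [hb 0 y z (Or.inl rfl), hb a y 0 (Or.inr (Or.inr rfl)), ha]
    exact ⟨a, (h1 0).symm, h1⟩
  intro x y z
  obtain ⟨a, ha0⟩ := (hG'q.2 0).surjective (G' x z)
  have ha : G' a 0 = G' x z := ha0
  have h1 : ∀ y', H' (G' x z) y' = H (G a y') 0 := by
    intro y'
    rw [← ha]; exact (hb a y' 0 (Or.inr (Or.inr rfl))).symm
  have h2 : H (G a 0) 0 = H (G x 0) z := by
    rw [hb x 0 z (Or.inr (Or.inl rfl)), h1 0]
  rw [keylemma G H hGq hHq cond x z a h2 y, h1 y]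

/-- binary quasigroup from a 2-ary IsNQuasigroup -/
theorem binQG_of_two {S : Type*} (g : (Fin 2 → S) → S) (hg : IsNQuasigroup g) :
    IsBinaryQG (fun a b => g ![a, b]) := by
  constructor
  · intro a
    have h := hg 1 ![a, a]
    have : (fun b => g ![a, b]) = fun b => g (Function.update ![a, a] 1 b) := by
      funext b
      congr 1
      funext k
      fin_cases k <;> simp [Function.update]
    show Function.Bijective fun b => g ![a, b]
    rw [this]; exact h
  · intro b
    have h := hg 0 ![b, b]
    have : (fun a => g ![a, b]) = fun a => g (Function.update ![b, b] 0 a) := by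
      funext a
      congr 1
      funext k
      fin_cases k <;> simp [Function.update]
    show Function.Bijective fun a => g ![a, b]
    rw [this]; exact h

def Forms (F : (Fin 3 → Fin 4) → Fin 4) : Prop :=
  ∃ G H : Fin 4 → Fin 4 → Fin 4, IsBinaryQG G ∧ IsBinaryQG H ∧
    ((∀ a b c, F ![a, b, c] = H (G a b) c) ∨
     (∀ a b c, F ![a, b, c] = H (G a c) b) ∨
     (∀ a b c, F ![a, b, c] = H (G b c) a))

theorem forms_of_reducible (F : (Fin 3 → Fin 4) → Fin 4) (hF : PermutablyReducible F) :
    Forms F := by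
  obtain ⟨m, hm2, hm1, σ, g, h, hgq, hhq, hFeq⟩ := hF
  have hm : m = 2 := by omega
  subst hm
  set G : Fin 4 → Fin 4 → Fin 4 := fun a b => g ![a, b] with hGdef
  set H : Fin 4 → Fin 4 → Fin 4 := fun a b => h ![a, b] with hHdef
  have hGq : IsBinaryQG G := binQG_of_two g hgq
  have hHq : IsBinaryQG H := binQG_of_two h hhq
  have key : ∀ x : Fin 3 → Fin 4, F x = H (G (x (σ 0)) (x (σ 1))) (x (σ 2)) := by
    intro x
    rw [hFeq x]
    have e1 : (fun k : Fin 2 => x (σ ⟨k.val, by omega⟩)) = ![x (σ 0), x (σ 1)] := by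
      funext k; fin_cases k <;> rfl
    have e2 : ∀ (A : Fin 4), (Fin.cons A fun j : Fin (3 - 2) =>
        x (σ ⟨2 + j.val, by have := j.isLt; omega⟩) : Fin (3 - 2 + 1) → Fin 4) = ![A, x (σ 2)] := by
      intro A
      funext j
      fin_cases j <;> rfl
    rw [e1, e2]
  have swapG : IsBinaryQG (fun a b => G b a) := ⟨hGq.2, hGq.1⟩
  have hval : ∀ i : Fin 3, i = 0 ∨ i = 1 ∨ i = 2 := by decide
  have hinj := σ.injective
  refine ?_
  rcases hval (σ 0) with h0 | h0 | h0 <;> rcases hval (σ 1) with h1 | h1 | h1 <;>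
    rcases hval (σ 2) with h2 | h2 | h2 <;>
    first
      | (exact absurd (hinj (h0.trans h1.symm)) (by decide))
      | (exact absurd (hinj (h0.trans h2.symm)) (by decide))
      | (exact absurd (hinj (h1.trans h2.symm)) (by decide))
      | (exact ⟨G, H, hGq, hHq, Or.inl fun a b c => by
          have := key ![a, b, c]; rw [h0, h1, h2] at this; exact this⟩)
      | (exact ⟨fun a b => G b a, H, swapG, hHq, Or.inl fun a b c => by
          have := key ![a, b, c]; rw [h0, h1, h2] at this; exact this⟩)
      | (exact ⟨G, H, hGq, hHq, Or.inr (Or.inl fun a b c => by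
          have := key ![a, b, c]; rw [h0, h1, h2] at this; exact this)⟩)
      | (exact ⟨fun a b => G b a, H, swapG, hHq, Or.inr (Or.inl fun a b c => by
          have := key ![a, b, c]; rw [h0, h1, h2] at this; exact this)⟩)
      | (exact ⟨G, H, hGq, hHq, Or.inr (Or.inr fun a b c => by
          have := key ![a, b, c]; rw [h0, h1, h2] at this; exact this)⟩)
      | (exact ⟨fun a b => G b a, H, swapG, hHq, Or.inr (Or.inr fun a b c => by
          have := key ![a, b, c]; rw [h0, h1, h2] at this; exact this)⟩)

theorem coreLemma (F F' : (Fin 3 → Fin 4) → Fin 4) (hF : Forms F) (hF' : Forms F')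
    (hb : ∀ a b c : Fin 4, a = 0 ∨ b = 0 ∨ c = 0 → F ![a, b, c] = F' ![a, b, c]) :
    ∀ a b c, F ![a, b, c] = F' ![a, b, c] := by
  obtain ⟨G, H, hGq, hHq, hf⟩ := hF
  obtain ⟨G', H', hG'q, hH'q, hf'⟩ := hF'
  intro a b c
  rcases hf with hA | hB | hC <;> rcases hf' with hA' | hB' | hC'
  -- (A,A)
  · rw [hA, hA']
    exact sameLemma G H G' H' hGq hH'q
      (fun x y z h => by rw [← hA, ← hA']; exact hb x y z h) a b c
  -- (A,B): cross
  · rw [hA, hB']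
    exact crossLemma G H G' H' hGq hHq hG'q
      (fun x y z h => by rw [← hA, ← hB']; exact hb x y z h) a b c
  -- (A,C): swap x↔y ↦ (A,B)
  · rw [hA, hC']
    exact crossLemma (fun a b => G b a) H G' H' ⟨hGq.2, hGq.1⟩ hHq hG'q
      (fun x y z h => by
        have := hb y x z (by tauto)
        rw [hA, hC'] at this; exact this) b a c
  -- (B,A): cross, symm
  · rw [hB, hA']
    exact (crossLemma G' H' G H hG'q hH'q hGq
      (fun x y z h => by rw [← hA', ← hB]; exact (hb x y z h).symm) a b c).symm
  -- (B,B): swap y↔z ↦ (A,A)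
  · rw [hB, hB']
    exact sameLemma G H G' H' hGq hH'q
      (fun x y z h => by rw [← hB, ← hB']; exact hb x z y (by tauto)) a c b
  -- (B,C): swap x↔z then it's (A? ...) : φ x y z = H (G x z) y ; ψ = H' (G' y z) x
  -- conjugate by swapping x and z: φ' x y z := φ z y x = H (G z x) y ; ψ' x y z = H' (G' y x) z
  -- so ψ' form A (with swapped G'), φ' form B (with swapped G): apply cross to (ψ', φ') symm
  · rw [hB, hC']
    exact (crossLemma (fun u v => G' v u) H' (fun u v => G v u) H
      ⟨hG'q.2, hG'q.1⟩ hH'q ⟨hGq.2, hGq.1⟩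
      (fun x y z h => by
        have := hb z y x (by tauto)
        rw [hB, hC'] at this; exact this.symm) c b a).symm
  -- (C,A): symm of (A,C)
  · rw [hC, hA']
    exact (crossLemma (fun a b => G' b a) H' G H ⟨hG'q.2, hG'q.1⟩ hH'q hGq
      (fun x y z h => by
        have := hb y x z (by tauto)
        rw [hC, hA'] at this; exact this.symm) b a c).symm
  -- (C,B): symm of (B,C)
  · rw [hC, hB']
    exact crossLemma (fun u v => G v u) H (fun u v => G' v u) H'
      ⟨hGq.2, hGq.1⟩ hHq ⟨hG'q.2, hG'q.1⟩
      (fun x y z h => by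
        have := hb z y x (by tauto)
        rw [hC, hB'] at this; exact this) c b a
  -- (C,C): swap x↔z (cyclic) ↦ same
  · rw [hC, hC']
    exact sameLemma G H G' H' hGq hH'q
      (fun x y z h => by
        have := hb z x y (by tauto)
        rw [hC, hC'] at this; exact this) b c a

/-- Corollary 3.1: `n`-quasigroups of order 4 (`n ≥ 3`) whose
principal 3-retracts are all permutably reducible and which agree on all tuples
with at most two nonzero coordinates are identical. -/
theorem stmt10 {n : ℕ} (hn : 3 ≤ n) (f g : (Fin n → Fin 4) → Fin 4)
    (hf : IsNQuasigroup f) (hg : IsNQuasigroup g)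
    (hf3 : ∀ (ι : Fin 3 → Fin n), Function.Injective ι →
      ∀ c : Fin n → Fin 4, PermutablyReducible (PrincipalRetract f ι c))
    (hg3 : ∀ (ι : Fin 3 → Fin n), Function.Injective ι →
      ∀ c : Fin n → Fin 4, PermutablyReducible (PrincipalRetract g ι c))
    (hagree : ∀ x : Fin n → Fin 4,
      (Finset.univ.filter fun i => x i ≠ 0).card ≤ 2 → f x = g x) :
    f = g := by
  have main : ∀ k (x : Fin n → Fin 4),
      (Finset.univ.filter fun i => x i ≠ 0).card ≤ k → f x = g x := by
    intro k
    induction k with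
    | zero => intro x hx; exact hagree x (hx.trans (by omega))
    | succ k ih =>
      intro x hx
      by_cases hle : (Finset.univ.filter fun i => x i ≠ 0).card ≤ k
      · exact ih x hle
      by_cases hk2 : k + 1 ≤ 2
      · exact hagree x (hx.trans hk2)
      push_neg at hle hk2
      have hcard : (Finset.univ.filter fun i => x i ≠ 0).card = k + 1 := le_antisymm hx hle
      have h3 : 2 < (Finset.univ.filter fun i => x i ≠ 0).card := by omega
      obtain ⟨i, hi, j, hj, l, hl, hij, hil, hjl⟩ := Finset.two_lt_card.mp h3
      set ι : Fin 3 → Fin n := ![i, j, l] with hιdef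
      have hιinj : Function.Injective ι := by
        intro s t hst
        fin_cases s <;> fin_cases t <;>
          simp_all [ι] <;> first | rfl | exact absurd hst (by assumption)
      have hijl_sub : ({i, j, l} : Finset (Fin n)) ⊆
          (Finset.univ.filter fun i => x i ≠ 0) := by
        intro t ht
        simp only [Finset.mem_insert, Finset.mem_singleton] at ht
        rcases ht with rfl | rfl | rfl
        · exact hi
        · exact hj
        · exact hl
      have hc3 : ({i, j, l} : Finset (Fin n)).card = 3 := by
        rw [Finset.card_insert_of_notMem (by simp [hij, hil]),
          Finset.card_insert_of_notMem (by simp [hjl]), Finset.card_singleton]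
      have hperm : ∀ y : Fin 3 → Fin 4, (Finset.univ.filter fun s => y s ≠ 0).card ≤ 2 →
          (Finset.univ.filter fun t => Function.extend ι y x t ≠ 0).card ≤ k := by
        intro y hy
        have hsub : (Finset.univ.filter fun t => Function.extend ι y x t ≠ 0) ⊆
            ((Finset.univ.filter fun t => x t ≠ 0) \ {i, j, l}) ∪
              (Finset.univ.filter fun s => y s ≠ 0).image ι := by
          intro t ht
          rw [Finset.mem_filter] at ht
          by_cases hr : ∃ s, ι s = t
          · obtain ⟨s, rfl⟩ := hr
            refine Finset.mem_union_right _ (Finset.mem_image.mpr ⟨s, ?_, rfl⟩)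
            rw [Finset.mem_filter]
            refine ⟨Finset.mem_univ _, ?_⟩
            have := ht.2
            rwa [hιinj.extend_apply] at this
          · refine Finset.mem_union_left _ ?_
            rw [Finset.mem_sdiff, Finset.mem_filter]
            constructor
            · refine ⟨Finset.mem_univ _, ?_⟩
              have := ht.2
              rwa [Function.extend_apply' _ _ _ hr] at this
            · intro hmem
              apply hr
              simp only [Finset.mem_insert, Finset.mem_singleton] at hmem
              rcases hmem with rfl | rfl | rfl
              · exact ⟨0, rfl⟩
              · exact ⟨1, rfl⟩
              · exact ⟨2, rfl⟩
        calc (Finset.univ.filter fun t => Function.extend ι y x t ≠ 0).card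
            ≤ _ := Finset.card_le_card hsub
          _ ≤ ((Finset.univ.filter fun t => x t ≠ 0) \ {i, j, l}).card +
              ((Finset.univ.filter fun s => y s ≠ 0).image ι).card :=
              Finset.card_union_le _ _
          _ ≤ k := by
              rw [Finset.card_sdiff_of_subset hijl_sub, hcard, hc3]
              have := Finset.card_image_le (s := Finset.univ.filter fun s => y s ≠ 0) (f := ι)
              omega
      have hsmall : ∀ a b c : Fin 4, a = 0 ∨ b = 0 ∨ c = 0 →
          (Finset.univ.filter fun s => (![a, b, c] : Fin 3 → Fin 4) s ≠ 0).card ≤ 2 := by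
        intro a b c h
        rcases h with rfl | rfl | rfl
        · calc _ ≤ ({1, 2} : Finset (Fin 3)).card := Finset.card_le_card (by
              intro s hs
              rw [Finset.mem_filter] at hs
              fin_cases s
              · exact absurd rfl hs.2
              · decide
              · decide)
            _ ≤ 2 := by decide
        · calc _ ≤ ({0, 2} : Finset (Fin 3)).card := Finset.card_le_card (by
              intro s hs
              rw [Finset.mem_filter] at hs
              fin_cases s
              · decide
              · exact absurd rfl hs.2
              · decide)
            _ ≤ 2 := by decide
        · calc _ ≤ ({0, 1} : Finset (Fin 3)).card := Finset.card_le_card (by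
              intro s hs
              rw [Finset.mem_filter] at hs
              fin_cases s
              · decide
              · decide
              · exact absurd rfl hs.2)
            _ ≤ 2 := by decide
      have hbF : ∀ a b c : Fin 4, a = 0 ∨ b = 0 ∨ c = 0 →
          PrincipalRetract f ι x ![a, b, c] = PrincipalRetract g ι x ![a, b, c] := by
        intro a b c h
        exact ih _ (hperm ![a, b, c] (hsmall a b c h))
      have hcore := coreLemma (PrincipalRetract f ι x) (PrincipalRetract g ι x)
        (forms_of_reducible _ (hf3 ι hιinj x)) (forms_of_reducible _ (hg3 ι hιinj x)) hbF
      have hext : Function.extend ι ![x i, x j, x l] x = x := by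
        funext t
        by_cases hr : ∃ s, ι s = t
        · obtain ⟨s, rfl⟩ := hr
          rw [hιinj.extend_apply]
          fin_cases s <;> rfl
        · exact Function.extend_apply' _ _ _ hr
      have h1 : f x = PrincipalRetract f ι x ![x i, x j, x l] := by
        unfold PrincipalRetract
        rw [hext]
      have h2 : g x = PrincipalRetract g ι x ![x i, x j, x l] := by
        unfold PrincipalRetract
        rw [hext]
      rw [h1, h2, hcore]
  funext x
  exact main _ x le_rfl
end

section
/- Let f be a standardly semilinear n-quasigroup of order 4 and let π = (1,0,3,2) (the permutation of {0,1,2,3} swapping 0↔1 and 2↔3). Then for every pair of distinct indices i,j ∈ {0,…,n}, f⟨x̄⟩ = f⟨x̄ with xᵢ replaced by π(xᵢ) and xⱼ replaced by π(xⱼ)⟩ for all x̄ ∈ {0,1,2,3}^{n+1}. -/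
lemma pi_unique : ∀ u v : Fin 4, lmap u = lmap v → u ≠ v → v = piPerm u := by decide

lemma lmap_pi (a : Fin 4) : lmap (piPerm a) = lmap a := by revert a; decide

lemma pi_pi (a : Fin 4) : piPerm (piPerm a) = a := by revert a; decide

lemma pi_ne (a : Fin 4) : piPerm a ≠ a := by revert a; decide

lemma pi_inj : Function.Injective piPerm := by decide

lemma keyA {n : ℕ} (f : (Fin n → Fin 4) → Fin 4) (hq : IsNQuasigroup f)
    (hs : StdSemilinear f) (i : Fin n) (x : Fin n → Fin 4) :
    f (Function.update x i (piPerm (x i))) = piPerm (f x) := by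
  apply pi_unique
  · rw [hs, hs]
    refine Finset.sum_congr rfl fun t _ => ?_
    rcases eq_or_ne t i with rfl | h
    · rw [Function.update_self, lmap_pi]
    · rw [Function.update_of_ne h]
  · intro hcon
    have h2 : f (Function.update x i (x i)) = f (Function.update x i (piPerm (x i))) := by
      rw [Function.update_eq_self]; exact hcon
    exact pi_ne (x i) ((hq i x).1 h2.symm)

lemma keyA' {n : ℕ} (f : (Fin n → Fin 4) → Fin 4) (hq : IsNQuasigroup f)
    (hs : StdSemilinear f) (i : Fin n) (x : Fin n → Fin 4) :
    f (fun t => if t = i then piPerm (x t) else x t) = piPerm (f x) := by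
  have h : (fun t => if t = i then piPerm (x t) else x t)
      = Function.update x i (piPerm (x i)) := by
    funext t
    rcases eq_or_ne t i with rfl | h
    · simp
    · simp [Function.update_of_ne h, h]
  rw [h, keyA f hq hs]

lemma keyA2 {n : ℕ} (f : (Fin n → Fin 4) → Fin 4) (hq : IsNQuasigroup f)
    (hs : StdSemilinear f) {i j : Fin n} (hij : i ≠ j) (x : Fin n → Fin 4) :
    f (fun t => if t = i ∨ t = j then piPerm (x t) else x t) = f x := by
  have h1 : (fun t => if t = i ∨ t = j then piPerm (x t) else x t)
      = (fun t => if t = j then piPerm ((fun s => if s = i then piPerm (x s) else x s) t)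
          else (fun s => if s = i then piPerm (x s) else x s) t) := by
    funext t
    rcases eq_or_ne t i with rfl | hti <;> rcases eq_or_ne t j with rfl | htj <;>
      simp_all [pi_pi]
  rw [h1, keyA' f hq hs, keyA' f hq hs, pi_pi]

/-- Proposition 4.2(a): the predicate of a standardly semilinear
`n`-quasigroup of order 4 is invariant under applying `π = (1,0,3,2)` to any two
of its `n+1` arguments. -/
theorem stmt13 {n : ℕ} (f : (Fin n → Fin 4) → Fin 4)
    (hq : IsNQuasigroup f) (hs : StdSemilinear f)
    (i j : Fin (n + 1)) (hij : i ≠ j) (z : Fin (n + 1) → Fin 4) :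
    (z 0 = f fun t : Fin n => z t.succ) ↔
    ((fun z' : Fin (n + 1) → Fin 4 => z' 0 = f fun t : Fin n => z' t.succ)
      (fun t => if t = i ∨ t = j then piPerm (z t) else z t)) := by
  show _ ↔ ((fun t => if t = i ∨ t = j then piPerm (z t) else z t) 0 =
      f fun t : Fin n => (fun s => if s = i ∨ s = j then piPerm (z s) else z s) t.succ)
  induction i using Fin.cases with
  | zero =>
    induction j using Fin.cases with
    | zero => exact absurd rfl hij
    | succ j' =>
      have h1 : (fun t : Fin n => (fun s : Fin (n+1) =>
            if s = 0 ∨ s = j'.succ then piPerm (z s) else z s) t.succ)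
          = fun t : Fin n => if t = j' then piPerm ((fun s : Fin n => z s.succ) t)
              else (fun s : Fin n => z s.succ) t := by
        funext t; simp [Fin.succ_ne_zero, Fin.succ_inj]
      simp only [h1, keyA' f hq hs]
      constructor
      · rintro h; simp [h]
      · intro h; exact pi_inj h
  | succ i' =>
    induction j using Fin.cases with
    | zero =>
      have h1 : (fun t : Fin n => (fun s : Fin (n+1) =>
            if s = i'.succ ∨ s = 0 then piPerm (z s) else z s) t.succ)
          = fun t : Fin n => if t = i' then piPerm ((fun s : Fin n => z s.succ) t)
              else (fun s : Fin n => z s.succ) t := by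
        funext t; simp [Fin.succ_ne_zero, Fin.succ_inj]
      simp only [h1, keyA' f hq hs]
      constructor
      · rintro h; simp [h]
      · intro h; exact pi_inj h
    | succ j' =>
      have hij' : i' ≠ j' := fun h => hij (by rw [h])
      have h1 : (fun t : Fin n => (fun s : Fin (n+1) =>
            if s = i'.succ ∨ s = j'.succ then piPerm (z s) else z s) t.succ)
          = fun t : Fin n => if t = i' ∨ t = j' then piPerm ((fun s : Fin n => z s.succ) t)
              else (fun s : Fin n => z s.succ) t := by
        funext t; simp [Fin.succ_inj]
      simp only [h1, keyA2 f hq hs hij']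
      have h0 : ¬((0:Fin (n+1)) = i'.succ ∨ (0:Fin (n+1)) = j'.succ) := by
        push_neg
        exact ⟨(Fin.succ_ne_zero i').symm, (Fin.succ_ne_zero j').symm⟩
      rw [if_neg h0]
end
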